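/- arXiv:2510.10997 — 8 statements merged into one kernel-verified Lean document; each statement's English description precedes it below -/
import Mathlib

section
/- Let φ : D_N × 2^{D_N} → ℝ satisfy φ_{ij}(g) = −φ_{ij}(τ_{ij}(g)) for all dyads (i,j) and networks g, where τ_{ij}(g) toggles the link (i,j) (adds it if absent, removes it if present). Then φ satisfies the path-independence condition φ_{ij}(g) + φ_{i'j'}(τ_{ij}(g)) = φ_{i'j'}(g) + φ_{ij}(τ_{i'j'}(g)) for all dyads (i,j), (i',j') and all networks g, if and only if there exists a function Ψ : 2^{D_N} → ℝ such that φ_{ij}(g) = Ψ(τ_{ij}(g)) − Ψ(g) for all (i,j) and g. Furthermore, such Ψ is unique up to an additive constant. -/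
/-- A dyad on `N` players: an ordered pair of distinct players. -/
abbrev Dyad (N : ℕ) := {p : Fin N × Fin N // p.1 ≠ p.2}

/-- The switching map `τ_{ij}`: toggles the link `e` in the network `g`
(adds it if absent, removes it if present). -/
def toggle {N : ℕ} (g : Finset (Dyad N)) (e : Dyad N) : Finset (Dyad N) :=
  if e ∈ g then g.erase e else insert e g

section Aux

variable {α : Type*} [DecidableEq α]

/-- general toggle -/
def tog (g : Finset α) (e : α) : Finset α := if e ∈ g then g.erase e else insert e g

lemma tog_eq_symmDiff (g : Finset α) (e : α) : tog g e = symmDiff g {e} := by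
  ext a
  simp only [tog, Finset.mem_symmDiff, Finset.mem_singleton]
  by_cases h : e ∈ g <;> by_cases ha : a = e <;>
    simp [h, ha, Finset.mem_erase, Finset.mem_insert] <;> tauto

lemma tog_comm (g : Finset α) (e e' : α) : tog (tog g e) e' = tog (tog g e') e := by
  simp only [tog_eq_symmDiff, symmDiff_assoc]
  rw [symmDiff_comm ({e} : Finset α) {e'}]

variable [LinearOrder α]

noncomputable def Psi (φ : α → Finset α → ℝ) (g : Finset α) : ℝ :=
  if h : g.Nonempty then
    Psi φ (g.erase (g.min' h)) + φ (g.min' h) (g.erase (g.min' h))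
  else 0
termination_by g.card
decreasing_by exact Finset.card_erase_lt_of_mem (g.min'_mem h)

lemma Psi_erase (φ : α → Finset α → ℝ)
    (hp : ∀ (e e' : α) (g : Finset α),
      φ e g + φ e' (tog g e) = φ e' g + φ e (tog g e')) :
    ∀ (g : Finset α) (e : α), e ∈ g →
      Psi φ g = Psi φ (g.erase e) + φ e (g.erase e) := by
  intro g
  induction g using Finset.strongInduction with
  | _ g ih =>
    intro e he
    have hne : g.Nonempty := ⟨e, he⟩
    rw [Psi, dif_pos hne]
    set m := g.min' hne with hm
    by_cases hem : e = m
    · subst hem; rfl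
    · have hmg : m ∈ g := g.min'_mem hne
      have h1 : e ∈ g.erase m := Finset.mem_erase.mpr ⟨hem, he⟩
      have h2 : m ∈ g.erase e := Finset.mem_erase.mpr ⟨fun h => hem h.symm, hmg⟩
      have ihm : Psi φ (g.erase m) =
          Psi φ ((g.erase m).erase e) + φ e ((g.erase m).erase e) :=
        ih (g.erase m) (Finset.erase_ssubset hmg) e h1
      have ihe : Psi φ (g.erase e) =
          Psi φ ((g.erase e).erase m) + φ m ((g.erase e).erase m) :=
        ih (g.erase e) (Finset.erase_ssubset he) m h2
      set h := (g.erase m).erase e with hh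
      have hcomm : (g.erase e).erase m = h := by
        ext x; simp only [hh, Finset.mem_erase]; tauto
      have hte : tog h e = g.erase m := by
        have : e ∉ h := Finset.notMem_erase _ _
        rw [tog, if_neg this, hh, Finset.insert_erase h1]
      have htm : tog h m = g.erase e := by
        have hmh : m ∉ h := by
          rw [← hcomm]; exact Finset.notMem_erase _ _
        rw [tog, if_neg hmh, ← hcomm, Finset.insert_erase h2]
      have key := hp e m h
      rw [hte, htm] at key
      rw [ihm, ihe, hcomm]
      linarith

lemma Psi_spec (φ : α → Finset α → ℝ)
    (hanti : ∀ (e : α) (g : Finset α), φ e g = - φ e (tog g e))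
    (hp : ∀ (e e' : α) (g : Finset α),
      φ e g + φ e' (tog g e) = φ e' g + φ e (tog g e')) :
    ∀ (e : α) (g : Finset α), φ e g = Psi φ (tog g e) - Psi φ g := by
  intro e g
  by_cases hg : e ∈ g
  · rw [tog, if_pos hg]
    have := Psi_erase φ hp g e hg
    have ha := hanti e g
    rw [tog, if_pos hg] at ha
    linarith
  · rw [tog, if_neg hg]
    have hmem : e ∈ insert e g := Finset.mem_insert_self e g
    have := Psi_erase φ hp (insert e g) e hmem
    rw [Finset.erase_insert hg] at this
    linarith

end Aux

/-- **Lemma 7 (conservative link functions admit a potential).**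
If `φ : D_N × 2^{D_N} → ℝ` satisfies `φ_{ij}(g) = −φ_{ij}(τ_{ij}(g))`, then `φ` satisfies
the path-independence condition iff there exists `Ψ` with
`φ_{ij}(g) = Ψ(τ_{ij}(g)) − Ψ(g)`; moreover such `Ψ` is unique up to an additive
constant. -/
theorem stmt_1 (N : ℕ) (hN : 2 ≤ N) (φ : Dyad N → Finset (Dyad N) → ℝ)
    (hanti : ∀ (e : Dyad N) (g : Finset (Dyad N)), φ e g = - φ e (toggle g e)) :
    ((∀ (e e' : Dyad N) (g : Finset (Dyad N)),
        φ e g + φ e' (toggle g e) = φ e' g + φ e (toggle g e')) ↔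
      (∃ Ψ : Finset (Dyad N) → ℝ, ∀ (e : Dyad N) (g : Finset (Dyad N)),
        φ e g = Ψ (toggle g e) - Ψ g)) ∧
    (∀ Ψ₁ Ψ₂ : Finset (Dyad N) → ℝ,
      (∀ (e : Dyad N) (g : Finset (Dyad N)), φ e g = Ψ₁ (toggle g e) - Ψ₁ g) →
      (∀ (e : Dyad N) (g : Finset (Dyad N)), φ e g = Ψ₂ (toggle g e) - Ψ₂ g) →
      ∃ K : ℝ, ∀ g : Finset (Dyad N), Ψ₁ g = Ψ₂ g + K) := by
  have htog : (toggle (N := N)) = tog := rfl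
  constructor
  · constructor
    · intro hp
      letI : LinearOrder (Dyad N) :=
        LinearOrder.lift' (Fintype.equivFin (Dyad N)) (Fintype.equivFin (Dyad N)).injective
      refine ⟨Psi φ, ?_⟩
      intro e g
      rw [htog] at hp hanti ⊢
      exact Psi_spec φ hanti hp e g
    · rintro ⟨Ψ, hΨ⟩ e e' g
      rw [hΨ, hΨ, hΨ, hΨ, htog, tog_comm g e e']
      ring
  · intro Ψ₁ Ψ₂ h1 h2
    refine ⟨Ψ₁ ∅ - Ψ₂ ∅, ?_⟩
    intro g
    induction g using Finset.induction with
    | empty => ring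
    | @insert a g ha ih =>
      have hta : toggle g a = insert a g := by rw [toggle, if_neg ha]
      have e1 := h1 a g
      have e2 := h2 a g
      rw [hta] at e1 e2
      linarith
end

section
/- The network formation game (J_N, 2^{D_N}, U) is a potential game if and only if the payoff functions U are conservative; that is, if and only if for all networks g ⊆ D_N and all dyads (i,j), (i',j') ∈ D_N: [U_i(τ_{ij}(g)) − U_i(g)] + [U_{i'}(τ_{i'j'}(τ_{ij}(g))) − U_{i'}(τ_{ij}(g))] = [U_{i'}(τ_{i'j'}(g)) − U_{i'}(g)] + [U_i(τ_{ij}(τ_{i'j'}(g))) − U_i(τ_{i'j'}(g))]. -/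
/-- The network `(s_i, g_{−i})`: the network `g` with player `i`'s strategy replaced by
the set of out-neighbors `s` (all links with source `i` are removed and replaced by the
links from `i` to the members of `s`). -/
def setStrat {N : ℕ} (g : Finset (Dyad N)) (i : Fin N) (s : Finset (Fin N)) :
    Finset (Dyad N) :=
  g.filter (fun e => e.val.1 ≠ i) ∪
    Finset.univ.filter (fun e : Dyad N => e.val.1 = i ∧ e.val.2 ∈ s)

/-- `Φ` is a potential of the network formation game with payoffs `U`:
`U_i(s_i, g_{−i}) − U_i(s_i', g_{−i}) = Φ(s_i, g_{−i}) − Φ(s_i', g_{−i})` for all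
players `i`, networks `g`, and strategies `s_i, s_i'`. -/
def IsPotential {N : ℕ} (U : Fin N → Finset (Dyad N) → ℝ)
    (Φ : Finset (Dyad N) → ℝ) : Prop :=
  ∀ (i : Fin N) (g : Finset (Dyad N)) (s s' : Finset (Fin N)),
    U i (setStrat g i s) - U i (setStrat g i s') =
      Φ (setStrat g i s) - Φ (setStrat g i s')

section Aux

variable {N : ℕ}

noncomputable instance dyadLO : LinearOrder (Dyad N) :=
  LinearOrder.lift' (Fintype.equivFin (Dyad N)) (Equiv.injective _)

lemma mem_toggle {g : Finset (Dyad N)} {e f : Dyad N} :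
    f ∈ toggle g e ↔ if f = e then e ∉ g else f ∈ g := by
  unfold toggle
  by_cases hg : e ∈ g <;> by_cases hf : f = e <;> simp [hg, hf]

lemma toggle_insert {g : Finset (Dyad N)} {e : Dyad N} (h : e ∉ g) :
    toggle g e = insert e g := by simp [toggle, h]

lemma toggle_erase {g : Finset (Dyad N)} {e : Dyad N} (h : e ∈ g) :
    toggle g e = g.erase e := by simp [toggle, h]

lemma toggle_comm {g : Finset (Dyad N)} {e e' : Dyad N} (h : e ≠ e') :
    toggle (toggle g e) e' = toggle (toggle g e') e := by
  ext f
  simp only [mem_toggle]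
  by_cases h1 : f = e <;> by_cases h2 : f = e' <;>
    simp [h1, h2, h, Ne.symm h]

def Conserv (U : Fin N → Finset (Dyad N) → ℝ) : Prop :=
  ∀ (g : Finset (Dyad N)) (e e' : Dyad N),
      (U e.val.1 (toggle g e) - U e.val.1 g) +
        (U e'.val.1 (toggle (toggle g e) e') - U e'.val.1 (toggle g e)) =
      (U e'.val.1 (toggle g e') - U e'.val.1 g) +
        (U e.val.1 (toggle (toggle g e') e) - U e.val.1 (toggle g e'))

noncomputable def Phi (U : Fin N → Finset (Dyad N) → ℝ) (g : Finset (Dyad N)) : ℝ :=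
  if h : g.Nonempty then
    Phi U (g.erase (g.min' h)) +
      (U (g.min' h).val.1 g - U (g.min' h).val.1 (g.erase (g.min' h)))
  else 0
termination_by g.card
decreasing_by exact Finset.card_erase_lt_of_mem (g.min'_mem h)

lemma Phi_eq (U : Fin N → Finset (Dyad N) → ℝ) (g : Finset (Dyad N)) (h : g.Nonempty) :
    Phi U g = Phi U (g.erase (g.min' h)) +
      (U (g.min' h).val.1 g - U (g.min' h).val.1 (g.erase (g.min' h))) := by
  rw [Phi, dif_pos h]

lemma phi_insert (U : Fin N → Finset (Dyad N) → ℝ) (H : Conserv U) :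
    ∀ (n : ℕ) (g : Finset (Dyad N)) (e : Dyad N), g.card = n → e ∉ g →
    Phi U (insert e g) = Phi U g + (U e.val.1 (insert e g) - U e.val.1 g) := by
  intro n
  induction n using Nat.strong_induction_on with
  | _ n ih =>
  intro g e hcard he
  have hne : (insert e g).Nonempty := Finset.insert_nonempty _ _
  set m := (insert e g).min' hne with hm
  have hmmem : m ∈ insert e g := Finset.min'_mem _ _
  by_cases hme : m = e
  · rw [Phi_eq U (insert e g) hne, ← hm, hme, Finset.erase_insert he]
  · have hmg : m ∈ g := by
      rcases Finset.mem_insert.1 hmmem with h | h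
      · exact absurd h hme
      · exact h
    have hgne : g.Nonempty := ⟨m, hmg⟩
    have hgmin : g.min' hgne = m := by
      have h1 := Finset.min'_le g m hmg
      have h2 := Finset.min'_le (insert e g) (g.min' hgne)
        (Finset.mem_insert_of_mem (g.min'_mem hgne))
      exact @le_antisymm _ dyadLO.toPartialOrder _ _ h1 h2
    set g' := g.erase m with hg'
    have heg' : e ∉ g' := fun h => he (Finset.mem_of_mem_erase h)
    have hmg' : m ∉ g' := Finset.notMem_erase _ _
    have hgins : insert m g' = g := Finset.insert_erase hmg
    have hcardlt : g'.card < n := by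
      rw [← hcard]; exact Finset.card_erase_lt_of_mem hmg
    have hkey : (insert e g).erase m = insert e g' := by
      rw [hg', Finset.erase_insert_of_ne (fun h => hme h.symm)]
    rw [Phi_eq U (insert e g) hne, ← hm, hkey]
    rw [ih g'.card hcardlt g' e rfl heg']
    rw [Phi_eq U g hgne, hgmin]
    have key := H g' e m
    rw [toggle_insert heg', toggle_insert hmg'] at key
    have t1 : toggle (insert e g') m = insert e g := by
      rw [toggle_insert (by simp [hmg', hme] : m ∉ insert e g'),
        Finset.insert_comm, hgins]
    have t2 : toggle (insert m g') e = insert e g := by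
      rw [hgins, toggle_insert he]
    rw [t1, t2, hgins] at key
    linarith

lemma phi_toggle (U : Fin N → Finset (Dyad N) → ℝ) (H : Conserv U)
    (g : Finset (Dyad N)) (e : Dyad N) :
    Phi U (toggle g e) - Phi U g = U e.val.1 (toggle g e) - U e.val.1 g := by
  by_cases heg : e ∈ g
  · rw [toggle_erase heg]
    have h1 := phi_insert U H (g.erase e).card (g.erase e) e rfl (Finset.notMem_erase _ _)
    rw [Finset.insert_erase heg] at h1
    linarith
  · rw [toggle_insert heg]
    have h1 := phi_insert U H g.card g e rfl heg
    linarith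

lemma U_sub_phi (U : Fin N → Finset (Dyad N) → ℝ) (H : Conserv U) (i : Fin N) :
    ∀ (n : ℕ) (g1 g2 : Finset (Dyad N)), (symmDiff g1 g2).card ≤ n →
    (∀ f : Dyad N, f.val.1 ≠ i → (f ∈ g1 ↔ f ∈ g2)) →
    U i g1 - U i g2 = Phi U g1 - Phi U g2 := by
  intro n
  induction n with
  | zero =>
    intro g1 g2 hcard _
    have h0 : symmDiff g1 g2 = ⊥ := by
      rw [Finset.bot_eq_empty]
      exact Finset.card_eq_zero.1 (Nat.le_zero.1 hcard)
    rw [symmDiff_eq_bot.1 h0]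
    ring
  | succ n ih =>
    intro g1 g2 hcard hagree
    by_cases hempty : symmDiff g1 g2 = ∅
    · have h0 : symmDiff g1 g2 = ⊥ := by rw [Finset.bot_eq_empty]; exact hempty
      rw [symmDiff_eq_bot.1 h0]; ring
    · obtain ⟨e, he⟩ := Finset.nonempty_iff_ne_empty.2 hempty
      have hei : e.val.1 = i := by
        by_contra h
        have h2 := hagree e h
        rw [Finset.mem_symmDiff] at he
        tauto
      set g1' := toggle g1 e with hg1'
      have hsub : symmDiff g1' g2 ⊆ (symmDiff g1 g2).erase e := by
        intro f hf
        rw [Finset.mem_erase]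
        rw [Finset.mem_symmDiff] at hf ⊢
        by_cases hfe : f = e
        · exfalso
          subst hfe
          have hm : f ∈ g1' ↔ f ∉ g1 := by simp [hg1', mem_toggle]
          rw [Finset.mem_symmDiff] at he
          tauto
        · have hm : f ∈ g1' ↔ f ∈ g1 := by simp [hg1', mem_toggle, hfe]
          exact ⟨hfe, by tauto⟩
      have hcard' : (symmDiff g1' g2).card ≤ n := by
        have h1 := Finset.card_le_card hsub
        have h2 := Finset.card_erase_of_mem he
        omega
      have hagree' : ∀ f : Dyad N, f.val.1 ≠ i → (f ∈ g1' ↔ f ∈ g2) := by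
        intro f hfi
        have hfe : f ≠ e := fun h => hfi (by rw [h, hei])
        rw [show (f ∈ g1') ↔ f ∈ g1 from by simp [hg1', mem_toggle, hfe]]
        exact hagree f hfi
      have hIH := ih g1' g2 hcard' hagree'
      have htog := phi_toggle U H g1 e
      rw [hei] at htog
      linarith

lemma mem_setStrat {g : Finset (Dyad N)} {i : Fin N} {s : Finset (Fin N)} {f : Dyad N} :
    f ∈ setStrat g i s ↔ (f ∈ g ∧ f.val.1 ≠ i) ∨ (f.val.1 = i ∧ f.val.2 ∈ s) := by
  simp [setStrat]

def outN (i : Fin N) (g : Finset (Dyad N)) : Finset (Fin N) :=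
  (g.filter (fun f => f.val.1 = i)).image (fun f => f.val.2)

lemma setStrat_outN (g : Finset (Dyad N)) (i : Fin N) : setStrat g i (outN i g) = g := by
  ext f
  rw [mem_setStrat]
  simp only [outN, Finset.mem_image, Finset.mem_filter]
  constructor
  · rintro (⟨h, -⟩ | ⟨hfi, a, ⟨hag, hai⟩, ha2⟩)
    · exact h
    · have : a = f := Subtype.ext (Prod.ext (hai.trans hfi.symm) ha2)
      rwa [this] at hag
  · intro hf
    by_cases hfi : f.val.1 = i
    · exact Or.inr ⟨hfi, ⟨f, ⟨hf, hfi⟩, rfl⟩⟩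
    · exact Or.inl ⟨hf, hfi⟩

lemma setStrat_congr {g h : Finset (Dyad N)} {i : Fin N} {s : Finset (Fin N)}
    (hagree : ∀ f : Dyad N, f.val.1 ≠ i → (f ∈ g ↔ f ∈ h)) :
    setStrat g i s = setStrat h i s := by
  unfold setStrat
  congr 1
  ext f
  simp only [Finset.mem_filter]
  constructor
  · rintro ⟨h1, h2⟩; exact ⟨(hagree f h2).1 h1, h2⟩
  · rintro ⟨h1, h2⟩; exact ⟨(hagree f h2).2 h1, h2⟩


/-- **Proposition 1.** The network formation game is a potential game if and only if
the payoff functions are conservative: for all networks `g` and dyads `(i,j)`, `(i',j')`,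
the sum of the marginal utilities of changing the state of the two links is independent
of the order in which the changes are made. -/
theorem stmt_2 (N : ℕ) (hN : 2 ≤ N) (U : Fin N → Finset (Dyad N) → ℝ) :
    (∃ Φ : Finset (Dyad N) → ℝ, IsPotential U Φ) ↔
    (∀ (g : Finset (Dyad N)) (e e' : Dyad N),
      (U e.val.1 (toggle g e) - U e.val.1 g) +
        (U e'.val.1 (toggle (toggle g e) e') - U e'.val.1 (toggle g e)) =
      (U e'.val.1 (toggle g e') - U e'.val.1 g) +
        (U e.val.1 (toggle (toggle g e') e) - U e.val.1 (toggle g e'))) := by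
  constructor
  · rintro ⟨Φ, hΦ⟩ g e e'
    have key : ∀ (g : Finset (Dyad N)) (e : Dyad N),
        U e.val.1 (toggle g e) - U e.val.1 g = Φ (toggle g e) - Φ g := by
      intro g e
      have hagree : ∀ f : Dyad N, f.val.1 ≠ e.val.1 → (f ∈ g ↔ f ∈ toggle g e) := by
        intro f hf
        simp [mem_toggle, show f ≠ e from fun h => hf (by rw [h])]
      have h1 : setStrat g e.val.1 (outN e.val.1 (toggle g e)) = toggle g e := by
        rw [setStrat_congr hagree, setStrat_outN]
      have h2 : setStrat g e.val.1 (outN e.val.1 g) = g := setStrat_outN g _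
      have h3 := hΦ e.val.1 g (outN e.val.1 (toggle g e)) (outN e.val.1 g)
      rwa [h1, h2] at h3
    by_cases hee : e = e'
    · subst hee; ring
    · have hc := toggle_comm (g := g) hee
      have k1 := key g e
      have k2 := key g e'
      have k3 := key (toggle g e) e'
      have k4 := key (toggle g e') e
      rw [hc] at k3
      rw [hc]
      linarith
  · intro H
    refine ⟨Phi U, fun i g s s' => ?_⟩
    have hagree : ∀ f : Dyad N, f.val.1 ≠ i →
        (f ∈ setStrat g i s ↔ f ∈ setStrat g i s') := by
      intro f hf
      rw [mem_setStrat, mem_setStrat]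
      simp [hf]
    exact U_sub_phi U H i _ _ _ le_rfl hagree


end Aux
end

section
/- Two payoff profiles U and Ũ on the network formation game, with structure values V and Ṽ obtained by Möbius inversion (U_i(g) = Σ_{g'⊆g} V_i(g') and likewise for Ũ, Ṽ), are choice-equivalent if and only if V_i(g) = Ṽ_i(g) for every network g ⊆ D_N and every player i that is a source node of g (i.e. i ∈ J_src(g) = {i : ∃ j, (i,j) ∈ g}). -/
/-- Two payoff profiles are choice-equivalent:
`U_i(s_i,g_{−i}) − U_i(s_i',g_{−i}) = Ũ_i(s_i,g_{−i}) − Ũ_i(s_i',g_{−i})` always. -/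
def ChoiceEquiv {N : ℕ} (U Ut : Fin N → Finset (Dyad N) → ℝ) : Prop :=
  ∀ (i : Fin N) (g : Finset (Dyad N)) (s s' : Finset (Fin N)),
    U i (setStrat g i s) - U i (setStrat g i s') =
      Ut i (setStrat g i s) - Ut i (setStrat g i s')

/-- The structure values of `U`, obtained by Möbius inversion:
`V_i(g) = ∑_{g' ⊆ g} (−1)^{|g \ g'|} U_i(g')`. -/
noncomputable def mobiusV {N : ℕ} (U : Fin N → Finset (Dyad N) → ℝ)
    (i : Fin N) (g : Finset (Dyad N)) : ℝ :=
  ∑ g' ∈ g.powerset, (-1 : ℝ) ^ (g \ g').card * U i g'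

/-- Player `i` is a source node of the structure `g`: `i ∈ J_src(g)`. -/
def IsSource {N : ℕ} (i : Fin N) (g : Finset (Dyad N)) : Prop :=
  ∃ e ∈ g, e.val.1 = i

/- ### Auxiliary material -/

/-- Möbius transform for an arbitrary set function. -/
noncomputable def mob {α : Type*} [DecidableEq α] (f : Finset α → ℝ) (g : Finset α) : ℝ :=
  ∑ g' ∈ g.powerset, (-1 : ℝ) ^ (g \ g').card * f g'

lemma mob_sub {N : ℕ} (U Ut : Fin N → Finset (Dyad N) → ℝ) (i : Fin N) (g : Finset (Dyad N)) :
    mobiusV U i g - mobiusV Ut i g = mob (fun h => U i h - Ut i h) g := by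
  unfold mobiusV mob
  rw [← Finset.sum_sub_distrib]
  exact Finset.sum_congr rfl fun g' _ => by ring

lemma alt_sum_powerset {α : Type*} [DecidableEq α] (s : Finset α) :
    (∑ t ∈ s.powerset, (-1 : ℝ) ^ t.card) = if s = ∅ then 1 else 0 := by
  have h := Finset.sum_powerset_neg_one_pow_card (x := s)
  have : ((∑ t ∈ s.powerset, (-1 : ℤ) ^ t.card : ℤ) : ℝ)
      = ∑ t ∈ s.powerset, (-1 : ℝ) ^ t.card := by push_cast; rfl
  rw [← this, h]
  split_ifs <;> simp

/-- Möbius inversion: summing the transform over all subsets recovers `f`. -/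
lemma mob_inversion {α : Type*} [DecidableEq α] (f : Finset α → ℝ) (g : Finset α) :
    (∑ g' ∈ g.powerset, mob f g') = f g := by
  have step1 : (∑ g' ∈ g.powerset, mob f g') =
      ∑ g' ∈ g.powerset, ∑ g'' ∈ g.powerset,
        (if g'' ⊆ g' then (-1 : ℝ) ^ (g' \ g'').card * f g'' else 0) := by
    refine Finset.sum_congr rfl fun g' hg' => ?_
    rw [Finset.mem_powerset] at hg'
    have hpow : g'.powerset = g.powerset.filter (fun t => t ⊆ g') := by
      ext t
      simp only [Finset.mem_powerset, Finset.mem_filter]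
      exact ⟨fun h => ⟨h.trans hg', h⟩, fun h => h.2⟩
    rw [mob, hpow, Finset.sum_filter]
  rw [step1, Finset.sum_comm]
  have step2 : ∀ g'' ∈ g.powerset,
      (∑ g' ∈ g.powerset, (if g'' ⊆ g' then (-1 : ℝ) ^ (g' \ g'').card * f g'' else 0)) =
      f g'' * (if g \ g'' = ∅ then 1 else 0) := by
    intro g'' hg''
    rw [Finset.mem_powerset] at hg''
    rw [← Finset.sum_filter, ← alt_sum_powerset (g \ g''), Finset.mul_sum]
    refine Finset.sum_nbij' (fun g' => g' \ g'') (fun t => g'' ∪ t) ?_ ?_ ?_ ?_ ?_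
    · intro g' hg'
      simp only [Finset.mem_filter, Finset.mem_powerset] at hg'
      exact Finset.mem_powerset.2 (Finset.sdiff_subset_sdiff hg'.1 le_rfl)
    · intro t ht
      rw [Finset.mem_powerset] at ht
      simp only [Finset.mem_filter, Finset.mem_powerset]
      exact ⟨Finset.union_subset hg'' (ht.trans Finset.sdiff_subset), Finset.subset_union_left⟩
    · intro g' hg'
      simp only [Finset.mem_filter, Finset.mem_powerset] at hg'
      exact Finset.union_sdiff_of_subset hg'.2
    · intro t ht
      rw [Finset.mem_powerset] at ht
      have hd : Disjoint g'' t := Finset.disjoint_of_subset_right ht Finset.disjoint_sdiff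
      show (g'' ∪ t) \ g'' = t
      exact Finset.union_sdiff_cancel_left hd
    · intro g' hg'
      ring
  rw [Finset.sum_congr rfl step2]
  rw [Finset.sum_eq_single_of_mem g (Finset.mem_powerset_self g)]
  · simp
  · intro g'' hg'' hne
    rw [Finset.mem_powerset] at hg''
    have : ¬ (g \ g'' = ∅) := by
      intro h
      exact hne (le_antisymm hg'' (Finset.sdiff_eq_empty_iff_subset.1 h))
    simp [this]

/-- If `f` is invariant under removing the elements failing `p`, then the Möbius
transform vanishes on any set containing an element failing `p`. -/
lemma mob_eq_zero {α : Type*} [DecidableEq α] (f : Finset α → ℝ) (p : α → Prop)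
    [DecidablePred p] (hf : ∀ h, f h = f (h.filter p)) {g : Finset α} {e : α}
    (he : e ∈ g) (hpe : ¬ p e) : mob f g = 0 := by
  unfold mob
  refine Finset.sum_involution
    (fun g' _ => if e ∈ g' then g'.erase e else insert e g') ?_ ?_ ?_ ?_
  · intro g' hg'
    rw [Finset.mem_powerset] at hg'
    by_cases hmem : e ∈ g'
    · simp only [hmem, if_true]
      have hfe : f (g'.erase e) = f g' := by
        rw [hf (g'.erase e), hf g', Finset.filter_erase,
          Finset.erase_eq_of_notMem (by simp [hpe])]
      have hset : g \ g'.erase e = insert e (g \ g') := by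
        ext x
        by_cases hx : x = e <;>
          simp [hx, he, hmem, Finset.mem_erase, Finset.mem_sdiff]
      have hcard : (g \ g'.erase e).card = (g \ g').card + 1 := by
        rw [hset, Finset.card_insert_of_notMem (by simp [hmem])]
      rw [hfe, hcard, pow_succ]
      ring
    · simp only [hmem, if_false]
      have hfe : f (insert e g') = f g' := by
        rw [hf (insert e g'), hf g', Finset.filter_insert, if_neg hpe]
      have hset : g \ g' = insert e (g \ insert e g') := by
        ext x
        by_cases hx : x = e <;>
          simp [hx, he, hmem, Finset.mem_insert, Finset.mem_sdiff]
      have hcard : (g \ g').card = (g \ insert e g').card + 1 := by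
        rw [hset, Finset.card_insert_of_notMem (by simp)]
      rw [hfe, hcard, pow_succ]
      ring
  · intro g' hg' _
    by_cases hmem : e ∈ g' <;> simp only [hmem, if_true, if_false]
    · intro h
      have := Finset.notMem_erase e g'
      rw [h] at this
      exact this hmem
    · intro h
      have := Finset.mem_insert_self e g'
      rw [h] at this
      exact hmem this
  · intro g' hg'
    rw [Finset.mem_powerset] at hg' ⊢
    by_cases hmem : e ∈ g' <;> simp only [hmem, if_true, if_false]
    · exact (Finset.erase_subset e g').trans hg'
    · exact Finset.insert_subset he hg'
  · intro g' hg'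
    by_cases hmem : e ∈ g'
    · simp only [if_pos hmem, Finset.notMem_erase, if_false]
      exact Finset.insert_erase hmem
    · simp only [if_neg hmem, Finset.mem_insert_self, if_true]
      exact Finset.erase_insert hmem

lemma filter_setStrat {N : ℕ} (g : Finset (Dyad N)) (i : Fin N) (s : Finset (Fin N)) :
    (setStrat g i s).filter (fun e => e.val.1 ≠ i) = g.filter (fun e => e.val.1 ≠ i) := by
  ext e
  simp only [setStrat, Finset.mem_filter, Finset.mem_union, Finset.mem_univ, true_and]
  tauto

lemma setStrat_empty {N : ℕ} (g : Finset (Dyad N)) (i : Fin N) :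
    setStrat g i ∅ = g.filter (fun e => e.val.1 ≠ i) := by
  ext e
  simp [setStrat]

lemma setStrat_self {N : ℕ} (g : Finset (Dyad N)) (i : Fin N) :
    setStrat g i ((g.filter (fun e => e.val.1 = i)).image (fun e => e.val.2)) = g := by
  ext e
  simp only [setStrat, Finset.mem_union, Finset.mem_filter, Finset.mem_univ, true_and,
    Finset.mem_image]
  by_cases h : e.val.1 = i
  · constructor
    · rintro (⟨heg, _⟩ | ⟨_, e', ⟨he', he'1⟩, he'2⟩)
      · exact heg
      · have : e' = e := by
          apply Subtype.ext
          apply Prod.ext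
          · rw [he'1, h]
          · exact he'2
        rwa [this] at he'
    · intro heg
      exact Or.inr ⟨h, e, ⟨heg, h⟩, rfl⟩
  · constructor
    · rintro (⟨heg, _⟩ | ⟨h1, _⟩)
      · exact heg
      · exact absurd h1 h
    · intro heg
      exact Or.inl ⟨heg, h⟩

/-- **Lemma 2 (choice-equivalence and structure values).** Two payoff profiles `U`, `Ũ`
with structure values `V`, `Ṽ` are choice-equivalent iff `V_i(g) = Ṽ_i(g)` for every
structure `g` and every source node `i ∈ J_src(g)`. -/
theorem stmt_3 (N : ℕ) (hN : 2 ≤ N) (U Ut : Fin N → Finset (Dyad N) → ℝ) :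
    ChoiceEquiv U Ut ↔
      ∀ (g : Finset (Dyad N)) (i : Fin N), IsSource i g →
        mobiusV U i g = mobiusV Ut i g := by
  set W : Fin N → Finset (Dyad N) → ℝ := fun i h => U i h - Ut i h with hW
  constructor
  · intro hCE g i hsrc
    obtain ⟨e, he, hei⟩ := hsrc
    have hf : ∀ h, W i h = W i (h.filter (fun e => e.val.1 ≠ i)) := by
      intro h
      have := hCE i h ((h.filter (fun e => e.val.1 = i)).image (fun e => e.val.2)) ∅
      rw [setStrat_self, setStrat_empty] at this
      simp only [hW]
      linarith
    have hz : mob (W i) g = 0 :=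
      mob_eq_zero (W i) (fun e => e.val.1 ≠ i) hf he (by simp [hei])
    have h2 := mob_sub U Ut i g
    simp only [hW] at hz ⊢
    linarith [h2.symm ▸ hz]
  · intro hV i g s s'
    have hz : ∀ h, IsSource i h → mob (W i) h = 0 := by
      intro h hs
      have h1 := hV h i hs
      have h2 := mob_sub U Ut i h
      simp only [hW] at h2 ⊢
      linarith
    have hf : ∀ h, W i h = W i (h.filter (fun e => e.val.1 ≠ i)) := by
      intro h
      rw [← mob_inversion (W i) h, ← mob_inversion (W i) (h.filter (fun e => e.val.1 ≠ i))]
      refine (Finset.sum_subset (Finset.powerset_mono.2 (Finset.filter_subset _ _)) ?_).symm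
      intro g' hg' hg''
      rw [Finset.mem_powerset] at hg' hg''
      have : ∃ e ∈ g', ¬ (e ∈ h ∧ e.val.1 ≠ i) := by
        by_contra hcon
        push_neg at hcon
        exact hg'' fun x hx => Finset.mem_filter.2 ⟨(hcon x hx).1, (hcon x hx).2⟩
      obtain ⟨e, heg', hne⟩ := this
      have hei : e.val.1 = i := by
        by_cases h1 : e.val.1 = i
        · exact h1
        · exact absurd ⟨hg' heg', h1⟩ hne
      exact hz g' ⟨e, heg', hei⟩
    have key : W i (setStrat g i s) = W i (setStrat g i s') := by
      rw [hf (setStrat g i s), hf (setStrat g i s'), filter_setStrat, filter_setStrat]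
    simp only [hW] at key
    linarith
end

section
/- Consider the continuous-time Markov jump process on the finite state space 2^{D_N} whose only allowed transitions are g → τ_{ij}(g), with rate λ_{ij}(g)·p_{ij}(g), where λ_{ij}(g) > 0 satisfies λ_{ij}(g) = λ_{ij}(τ_{ij}(g)), and p_{ij}(g) = [1 + exp(−β(U_i(τ_{ij}(g)) − U_i(g)))]^{−1} with β = (1−σ)/σ, σ ∈ (0,1). Then this Markov process is reversible (i.e. there exists a probability distribution π on 2^{D_N} satisfying detailed balance λ_{ij}(g) p_{ij}(g) π(g) = λ_{ij}(τ_{ij}(g)) p_{ij}(τ_{ij}(g)) π(τ_{ij}(g)) for all g and (i,j)) if and only if the static game (J_N, 2^{D_N}, U) is a potential game. Moreover, if Φ is a potential of the static game, then the unique stationary distribution is the Gibbs measure π(g) = exp(βΦ(g)) / Σ_{g' ⊆ D_N} exp(βΦ(g')). -/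
/-- The logistic switching probability
`p_{ij}(g) = [1 + exp(−β(U_i(τ_{ij}(g)) − U_i(g)))]⁻¹`. -/
noncomputable def switchProb {N : ℕ} (U : Fin N → Finset (Dyad N) → ℝ) (β : ℝ)
    (e : Dyad N) (g : Finset (Dyad N)) : ℝ :=
  (1 + Real.exp (-(β * (U e.val.1 (toggle g e) - U e.val.1 g))))⁻¹

/-- `π` satisfies detailed balance for the jump rates
`g → τ_{ij}(g)` at rate `λ_{ij}(g) p_{ij}(g)`. -/
def DetailedBalance {N : ℕ} (lam : Dyad N → Finset (Dyad N) → ℝ)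
    (p : Dyad N → Finset (Dyad N) → ℝ) (π : Finset (Dyad N) → ℝ) : Prop :=
  ∀ (e : Dyad N) (g : Finset (Dyad N)),
    lam e g * p e g * π g =
      lam e (toggle g e) * p e (toggle g e) * π (toggle g e)

/-- `π` is a stationary distribution of the Markov jump process (Kolmogorov forward
equation equals zero at `π`). -/
def IsStationaryNet {N : ℕ} (lam : Dyad N → Finset (Dyad N) → ℝ)
    (p : Dyad N → Finset (Dyad N) → ℝ) (π : Finset (Dyad N) → ℝ) : Prop :=
  ∀ g : Finset (Dyad N),
    ∑ e : Dyad N,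
      lam e g * (p e (toggle g e) * π (toggle g e) - p e g * π g) = 0

/-- `π` is a probability distribution on the (finite) space of networks. -/
def IsProbDist {N : ℕ} (π : Finset (Dyad N) → ℝ) : Prop :=
  (∀ g, 0 ≤ π g) ∧ ∑ g : Finset (Dyad N), π g = 1

section Aux

variable {N : ℕ}

lemma toggle_toggle (g : Finset (Dyad N)) (e : Dyad N) : toggle (toggle g e) e = g := by
  by_cases h : e ∈ g <;> simp [toggle, h, Finset.insert_erase, Finset.erase_insert]

lemma exp_balance (a b : ℝ) :
    (1 + Real.exp (a - b))⁻¹ * Real.exp a = (1 + Real.exp (b - a))⁻¹ * Real.exp b := by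
  rw [inv_mul_eq_div, inv_mul_eq_div, div_eq_div_iff (by positivity) (by positivity)]
  rw [mul_add, mul_add, mul_one, mul_one, ← Real.exp_add, ← Real.exp_add]
  ring_nf

/-- The outgoing strategy of player `i` in network `g`. -/
def strat (g : Finset (Dyad N)) (i : Fin N) : Finset (Fin N) :=
  (g.filter (fun e => e.val.1 = i)).image (fun e => e.val.2)

lemma setStrat_strat (g : Finset (Dyad N)) (i : Fin N) : setStrat g i (strat g i) = g := by
  ext x
  simp only [setStrat, strat, Finset.mem_union, Finset.mem_filter, Finset.mem_univ,
    Finset.mem_image, true_and]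
  constructor
  · rintro (⟨h, _⟩ | ⟨h1, y, ⟨hy, hy1⟩, hy2⟩)
    · exact h
    · have : y = x := Subtype.ext (Prod.ext (hy1.trans h1.symm) hy2)
      exact this ▸ hy
  · intro hx
    by_cases h : x.val.1 = i
    · exact Or.inr ⟨h, x, ⟨hx, h⟩, rfl⟩
    · exact Or.inl ⟨hx, h⟩

lemma setStrat_toggle (g : Finset (Dyad N)) (e : Dyad N) (s : Finset (Fin N)) :
    setStrat (toggle g e) e.val.1 s = setStrat g e.val.1 s := by
  unfold setStrat
  congr 1
  ext x
  by_cases hxe : x = e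
  · subst hxe; simp [toggle]
  · by_cases h : e ∈ g <;>
      simp [toggle, h, Finset.mem_erase, Finset.mem_insert, hxe]

/-- The single-toggle potential property. -/
def Key (U : Fin N → Finset (Dyad N) → ℝ) (Φ : Finset (Dyad N) → ℝ) : Prop :=
  ∀ (h : Finset (Dyad N)) (e : Dyad N),
    U e.val.1 (toggle h e) - U e.val.1 h = Φ (toggle h e) - Φ h

lemma key_of_potential {U : Fin N → Finset (Dyad N) → ℝ} {Φ : Finset (Dyad N) → ℝ}
    (hP : IsPotential U Φ) : Key U Φ := by
  intro h e
  have h1 : setStrat h e.val.1 (strat (toggle h e) e.val.1) = toggle h e := by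
    rw [← setStrat_toggle h e, setStrat_strat]
  have h2 : setStrat h e.val.1 (strat h e.val.1) = h := setStrat_strat h e.val.1
  have := hP e.val.1 h (strat (toggle h e) e.val.1) (strat h e.val.1)
  rwa [h1, h2] at this

lemma setStrat_erase_self (g : Finset (Dyad N)) (i : Fin N) (s : Finset (Fin N)) :
    setStrat g i (s.erase i) = setStrat g i s := by
  unfold setStrat
  congr 1
  ext x
  simp only [Finset.mem_filter, Finset.mem_univ, true_and, Finset.mem_erase]
  constructor
  · rintro ⟨h1, _, h3⟩; exact ⟨h1, h3⟩
  · rintro ⟨h1, h2⟩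
    exact ⟨h1, fun he => x.prop (h1.trans he.symm), h2⟩

lemma setStrat_insert (g : Finset (Dyad N)) (i j : Fin N) (hij : i ≠ j)
    (s : Finset (Fin N)) (hj : j ∉ s) :
    setStrat g i (insert j s) = toggle (setStrat g i s) ⟨(i, j), hij⟩ := by
  have hnm : (⟨(i, j), hij⟩ : Dyad N) ∉ setStrat g i s := by
    simp [setStrat, hj]
  rw [toggle, if_neg hnm]
  ext x
  simp only [setStrat, Finset.mem_union, Finset.mem_filter, Finset.mem_univ, true_and,
    Finset.mem_insert]
  constructor
  · rintro (⟨h1, h2⟩ | ⟨h1, (h2 | h2)⟩)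
    · exact Or.inr (Or.inl ⟨h1, h2⟩)
    · exact Or.inl (Subtype.ext (Prod.ext h1 h2))
    · exact Or.inr (Or.inr ⟨h1, h2⟩)
  · rintro (rfl | (⟨h1, h2⟩ | ⟨h1, h2⟩))
    · exact Or.inr ⟨rfl, Or.inl rfl⟩
    · exact Or.inl ⟨h1, h2⟩
    · exact Or.inr ⟨h1, Or.inr h2⟩

lemma potential_of_key {U : Fin N → Finset (Dyad N) → ℝ} {Φ : Finset (Dyad N) → ℝ}
    (hK : Key U Φ) : IsPotential U Φ := by
  intro i g s s'
  suffices H : ∀ t : Finset (Fin N),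
      U i (setStrat g i t) - Φ (setStrat g i t) =
        U i (setStrat g i ∅) - Φ (setStrat g i ∅) by
    have h1 := H s
    have h2 := H s'
    linarith
  intro t
  induction t using Finset.strongInductionOn with
  | _ t IH =>
    rcases t.eq_empty_or_nonempty with rfl | ⟨j, hj⟩
    · rfl
    by_cases hji : j = i
    · subst hji
      rw [← setStrat_erase_self g j t]
      exact IH _ (Finset.erase_ssubset hj)
    · have hij : i ≠ j := fun h => hji h.symm
      have ht : t = insert j (t.erase j) := (Finset.insert_erase hj).symm
      rw [ht, setStrat_insert g i j hij _ (Finset.notMem_erase j _)]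
      have hk := hK (setStrat g i (t.erase j)) ⟨(i, j), hij⟩
      have := IH (t.erase j) (Finset.erase_ssubset hj)
      linarith

lemma toggle_symmDiff (g t : Finset (Dyad N)) (e : Dyad N) (he : e ∈ symmDiff g t) :
    symmDiff (toggle g e) t = (symmDiff g t).erase e := by
  ext x
  by_cases hxe : x = e
  · subst hxe
    simp only [Finset.mem_erase, ne_eq, not_true_eq_false, false_and, iff_false]
    rw [Finset.mem_symmDiff] at he ⊢
    by_cases h : x ∈ g <;> simp [toggle, h] <;> tauto
  · simp only [Finset.mem_erase, ne_eq, hxe, not_false_eq_true, true_and]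
    rw [Finset.mem_symmDiff, Finset.mem_symmDiff]
    by_cases h : e ∈ g <;> simp [toggle, h, hxe]

lemma connected_induction (P : Finset (Dyad N) → Prop)
    (hstep : ∀ g, P g → ∀ e, P (toggle g e))
    (g₀ : Finset (Dyad N)) (h0 : P g₀) : ∀ g, P g := by
  have H : ∀ n : ℕ, ∀ g : Finset (Dyad N), (symmDiff g g₀).card ≤ n → P g := by
    intro n
    induction n with
    | zero =>
      intro g hg
      have h1 : symmDiff g g₀ = ∅ := Finset.card_eq_zero.mp (Nat.le_zero.mp hg)
      have : g = g₀ := by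
        have h2 : symmDiff g g₀ = (⊥ : Finset (Dyad N)) := h1
        rwa [symmDiff_eq_bot] at h2
      exact this ▸ h0
    | succ n IH =>
      intro g hg
      rcases (symmDiff g g₀).eq_empty_or_nonempty with hemp | ⟨e, he⟩
      · have h2 : symmDiff g g₀ = (⊥ : Finset (Dyad N)) := hemp
        rw [symmDiff_eq_bot] at h2
        exact h2 ▸ h0
      · have hcard : (symmDiff (toggle g e) g₀).card ≤ n := by
          rw [toggle_symmDiff g g₀ e he]
          have := Finset.card_erase_of_mem he
          omega
        have := IH (toggle g e) hcard
        have := hstep (toggle g e) this e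
        rwa [toggle_toggle] at this
  exact fun g => H (symmDiff g g₀).card g le_rfl

lemma switchProb_pos (U : Fin N → Finset (Dyad N) → ℝ) (β : ℝ) (e : Dyad N)
    (g : Finset (Dyad N)) : 0 < switchProb U β e g := by
  unfold switchProb; positivity

/-- Unnormalized Gibbs detailed balance from the Key property. -/
lemma gibbs_balance {U : Fin N → Finset (Dyad N) → ℝ} {Φ : Finset (Dyad N) → ℝ}
    (hK : Key U Φ) (β : ℝ) (e : Dyad N) (g : Finset (Dyad N)) :
    switchProb U β e g * Real.exp (β * Φ g) =
      switchProb U β e (toggle g e) * Real.exp (β * Φ (toggle g e)) := by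
  have h1 := hK g e
  unfold switchProb
  have e1 : -(β * (U e.val.1 (toggle g e) - U e.val.1 g)) = β * Φ g - β * Φ (toggle g e) := by
    rw [h1]; ring
  have e2 : -(β * (U e.val.1 (toggle (toggle g e) e) - U e.val.1 (toggle g e))) =
      β * Φ (toggle g e) - β * Φ g := by
    have h2 := hK (toggle g e) e
    rw [toggle_toggle] at h2 ⊢
    rw [h2]; ring
  rw [e1, e2]
  exact exp_balance (β * Φ g) (β * Φ (toggle g e))

/-- From detailed balance with a positive `π`, extract the Key property. -/
lemma key_of_db {U : Fin N → Finset (Dyad N) → ℝ} {lam : Dyad N → Finset (Dyad N) → ℝ}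
    (hpos : ∀ e g, 0 < lam e g)
    (hsym : ∀ e g, lam e g = lam e (toggle g e))
    {β : ℝ} (hβ : 0 < β) {π : Finset (Dyad N) → ℝ} (hπ : ∀ g, 0 < π g)
    (hDB : DetailedBalance lam (switchProb U β) π) :
    Key U (fun g => Real.log (π g) / β) := by
  intro g e
  have hdb := hDB e g
  rw [← hsym e g] at hdb
  have hl := (hpos e g).ne'
  have hdb' : switchProb U β e g * π g =
      switchProb U β e (toggle g e) * π (toggle g e) := by
    apply mul_left_cancel₀ hl
    rw [← mul_assoc, ← mul_assoc]; exact hdb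
  set x := β * (U e.val.1 (toggle g e) - U e.val.1 g) with hx
  have hsp1 : switchProb U β e g = (1 + Real.exp (-x))⁻¹ := rfl
  have hsp2 : switchProb U β e (toggle g e) = (1 + Real.exp x)⁻¹ := by
    unfold switchProb
    rw [toggle_toggle]
    congr 2
    rw [hx]; ring
  rw [hsp1, hsp2] at hdb'
  have hratio : π (toggle g e) = Real.exp x * π g := by
    have h1 : (0:ℝ) < 1 + Real.exp (-x) := by positivity
    have h2 : (0:ℝ) < 1 + Real.exp x := by positivity
    have hb := exp_balance x 0
    simp only [sub_zero, zero_sub, Real.exp_zero, mul_one] at hb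
    rw [← hb] at hdb'
    field_simp at hdb' ⊢
    linarith [hdb']
  have hlog : Real.log (π (toggle g e)) = x + Real.log (π g) := by
    rw [hratio, Real.log_mul (Real.exp_ne_zero x) (hπ g).ne', Real.log_exp]
  show U e.val.1 (toggle g e) - U e.val.1 g =
      Real.log (π (toggle g e)) / β - Real.log (π g) / β
  rw [hlog]
  field_simp
  rw [hx]; ring

end Aux

set_option maxHeartbeats 1000000 in
/-- **Proposition 3.** The dynamic network formation process is reversible iff the
static game is a potential game; and if `Φ` is a potential, the Gibbs measure
`π(g) = exp(βΦ(g)) / ∑_{g'} exp(βΦ(g'))` is the unique stationary distribution. -/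
theorem stmt_5 (N : ℕ) (hN : 2 ≤ N) (U : Fin N → Finset (Dyad N) → ℝ)
    (lam : Dyad N → Finset (Dyad N) → ℝ)
    (hpos : ∀ e g, 0 < lam e g)
    (hsym : ∀ e g, lam e g = lam e (toggle g e))
    (σ : ℝ) (hσ : σ ∈ Set.Ioo (0 : ℝ) 1) (β : ℝ) (hβ : β = (1 - σ) / σ) :
    ((∃ π : Finset (Dyad N) → ℝ, IsProbDist π ∧
        DetailedBalance lam (switchProb U β) π) ↔
      ∃ Φ : Finset (Dyad N) → ℝ, IsPotential U Φ) ∧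
    (∀ Φ : Finset (Dyad N) → ℝ, IsPotential U Φ →
      (IsProbDist (fun g : Finset (Dyad N) =>
          Real.exp (β * Φ g) / ∑ g' : Finset (Dyad N), Real.exp (β * Φ g')) ∧
       IsStationaryNet lam (switchProb U β) (fun g =>
          Real.exp (β * Φ g) / ∑ g' : Finset (Dyad N), Real.exp (β * Φ g')) ∧
       ∀ π : Finset (Dyad N) → ℝ, IsProbDist π →
          IsStationaryNet lam (switchProb U β) π →
          π = fun g => Real.exp (β * Φ g) / ∑ g' : Finset (Dyad N), Real.exp (β * Φ g'))) := by
  obtain ⟨hσ0, hσ1⟩ := hσ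
  have hβpos : 0 < β := by
    rw [hβ]
    apply div_pos <;> linarith
  -- Z and basic facts about the Gibbs measure
  have hZpos : ∀ Φ : Finset (Dyad N) → ℝ,
      0 < ∑ g' : Finset (Dyad N), Real.exp (β * Φ g') := by
    intro Φ
    apply Finset.sum_pos (fun g _ => Real.exp_pos _)
    exact ⟨∅, Finset.mem_univ _⟩
  -- Gibbs is a probability distribution
  have hGibbsProb : ∀ Φ : Finset (Dyad N) → ℝ,
      IsProbDist (fun g : Finset (Dyad N) =>
        Real.exp (β * Φ g) / ∑ g' : Finset (Dyad N), Real.exp (β * Φ g')) := by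
    intro Φ
    refine ⟨fun g => div_nonneg (Real.exp_pos _).le (hZpos Φ).le, ?_⟩
    rw [← Finset.sum_div, div_self (hZpos Φ).ne']
  -- Gibbs satisfies detailed balance given a potential
  have hGibbsDB : ∀ Φ : Finset (Dyad N) → ℝ, IsPotential U Φ →
      DetailedBalance lam (switchProb U β) (fun g : Finset (Dyad N) =>
        Real.exp (β * Φ g) / ∑ g' : Finset (Dyad N), Real.exp (β * Φ g')) := by
    intro Φ hP e g
    have hK := key_of_potential hP
    have hb := gibbs_balance hK β e g
    rw [← hsym e g]
    simp only
    linear_combination (lam e g / ∑ g' : Finset (Dyad N), Real.exp (β * Φ g')) * hb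
  -- detailed balance implies stationarity
  have hDBstat : ∀ π : Finset (Dyad N) → ℝ,
      DetailedBalance lam (switchProb U β) π → IsStationaryNet lam (switchProb U β) π := by
    intro π hDB g
    apply Finset.sum_eq_zero
    intro e _
    have h := hDB e g
    rw [← hsym e g] at h
    rw [mul_sub]
    rw [← mul_assoc, ← mul_assoc, ← h]
    ring
  constructor
  · -- the iff
    constructor
    · rintro ⟨π, ⟨hnn, hsum⟩, hDB⟩
      -- π is everywhere positive
      have hπpos : ∀ g, 0 < π g := by
        have hex : ∃ g₀ : Finset (Dyad N), 0 < π g₀ := by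
          by_contra hc
          push_neg at hc
          have : ∀ g ∈ Finset.univ, π g = 0 := fun g _ => le_antisymm (hc g) (hnn g)
          rw [Finset.sum_eq_zero this] at hsum
          norm_num at hsum
        obtain ⟨g₀, hg₀⟩ := hex
        apply connected_induction (fun g => 0 < π g) ?_ g₀ hg₀
        intro g hg e
        have h := hDB e g
        have hL : 0 < lam e g * switchProb U β e g * π g := by
          have := hpos e g
          have := switchProb_pos U β e g
          positivity
        rw [h] at hL
        rcases (hnn (toggle g e)).lt_or_eq with h' | h'
        · exact h'
        · exfalso
          rw [← h'] at hL
          simp at hL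
      -- build the potential
      have hK := key_of_db hpos hsym hβpos hπpos hDB
      exact ⟨_, potential_of_key hK⟩
    · rintro ⟨Φ, hP⟩
      exact ⟨_, hGibbsProb Φ, hGibbsDB Φ hP⟩
  · -- Gibbs properties
    intro Φ hP
    refine ⟨hGibbsProb Φ, hDBstat _ (hGibbsDB Φ hP), ?_⟩
    -- uniqueness
    intro π ⟨hnn, hsum⟩ hstat
    have hK := key_of_potential hP
    set Z := ∑ g' : Finset (Dyad N), Real.exp (β * Φ g') with hZ
    have hZp : 0 < Z := hZpos Φ
    set c : Finset (Dyad N) → ℝ := fun g => π g * Real.exp (-(β * Φ g)) with hc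
    have hπeq : ∀ g, π g = c g * Real.exp (β * Φ g) := by
      intro g
      simp only [hc]
      rw [mul_assoc, ← Real.exp_add, neg_add_cancel, Real.exp_zero, mul_one]
    -- stationarity in terms of c
    have hstat' : ∀ g : Finset (Dyad N),
        ∑ e : Dyad N, (lam e g * switchProb U β e g * Real.exp (β * Φ g)) *
          (c (toggle g e) - c g) = 0 := by
      intro g
      rw [← hstat g]
      apply Finset.sum_congr rfl
      intro e _
      have hb := gibbs_balance hK β e g
      have hX : lam e g * switchProb U β e (toggle g e) * Real.exp (β * Φ (toggle g e)) =
          lam e g * switchProb U β e g * Real.exp (β * Φ g) := by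
        rw [mul_assoc, mul_assoc, hb]
      have hF' : Real.exp (-(β * Φ (toggle g e))) * Real.exp (β * Φ (toggle g e)) = 1 := by
        rw [← Real.exp_add, neg_add_cancel, Real.exp_zero]
      have hFg : Real.exp (-(β * Φ g)) * Real.exp (β * Φ g) = 1 := by
        rw [← Real.exp_add, neg_add_cancel, Real.exp_zero]
      simp only [hc]
      linear_combination (-(π (toggle g e) * Real.exp (-(β * Φ (toggle g e))))) * hX +
        (lam e g * switchProb U β e (toggle g e) * π (toggle g e)) * hF' +
        (-(lam e g * switchProb U β e g * π g)) * hFg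
    -- c attains a maximum
    obtain ⟨g₀, hg₀⟩ := Finite.exists_max c
    set M := c g₀ with hM
    -- the max set is closed under toggling
    have hclosed : ∀ g, c g = M → ∀ e : Dyad N, c (toggle g e) = M := by
      intro g hgM e
      have hsum0 := hstat' g
      have hterm : ∀ e' : Dyad N, e' ∈ Finset.univ →
          0 ≤ (lam e' g * switchProb U β e' g * Real.exp (β * Φ g)) * (M - c (toggle g e')) := by
        intro e' _
        apply mul_nonneg
        · have := hpos e' g
          have := switchProb_pos U β e' g
          positivity
        · linarith [hg₀ (toggle g e')]
      have hsum0' : ∑ e' : Dyad N,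
          (lam e' g * switchProb U β e' g * Real.exp (β * Φ g)) * (M - c (toggle g e')) = 0 := by
        rw [← neg_eq_zero, ← Finset.sum_neg_distrib]
        rw [← hsum0]
        apply Finset.sum_congr rfl
        intro e' _
        rw [hgM]
        ring
      have := (Finset.sum_eq_zero_iff_of_nonneg hterm).mp hsum0' e (Finset.mem_univ e)
      have hcoef : 0 < lam e g * switchProb U β e g * Real.exp (β * Φ g) := by
        have := hpos e g
        have := switchProb_pos U β e g
        positivity
      have := mul_eq_zero.mp this
      rcases this with h | h
      · exact absurd h hcoef.ne'
      · linarith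
    -- hence c is constant equal to M
    have hconst : ∀ g, c g = M :=
      connected_induction (fun g => c g = M) hclosed g₀ rfl
    -- conclude
    have hMval : M * Z = 1 := by
      rw [← hsum]
      rw [Finset.mul_sum]
      apply Finset.sum_congr rfl
      intro g _
      rw [hπeq g, hconst g]
    funext g
    rw [hπeq g, hconst g]
    rw [eq_div_iff hZp.ne']
    linear_combination Real.exp (β * Φ g) * hMval
end

section
/- Let m be a finite directed graph on vertex set {1,...,n} with edge set E ⊆ {(i,j) : i ≠ j} having e = |E| ≥ 1 edges, and let h : [0,1]² → [0,1] be measurable. Then ∫_{[0,1]^n} ∏_{(i,j)∈E} h(x_i, x_j) dx_1⋯dx_n ≤ ∫_{[0,1]²} h(x,y)^e dx dy, with equality when e = 1. -/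
open MeasureTheory

/-- The unit cube `[0,1]^n` in `Fin n → ℝ`. -/
def unitCube (n : ℕ) : Set (Fin n → ℝ) :=
  Set.univ.pi fun _ => Set.Icc (0 : ℝ) 1

/-- The unit square `[0,1]²` in `ℝ × ℝ`. -/
def unitSquare : Set (ℝ × ℝ) :=
  (Set.Icc (0 : ℝ) 1) ×ˢ (Set.Icc (0 : ℝ) 1)

open Set

noncomputable def mu0 : Measure ℝ := volume.restrict (Set.Icc (0:ℝ) 1)

instance : IsProbabilityMeasure mu0 := by
  constructor
  simp [mu0, Real.volume_Icc]

lemma restrict_pi (n : ℕ) :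
    (volume : Measure (Fin n → ℝ)).restrict (Set.univ.pi fun _ => Set.Icc (0:ℝ) 1)
      = Measure.pi (fun _ : Fin n => mu0) := by
  refine (Measure.pi_eq (μ := fun _ : Fin n => mu0) fun s hs => ?_).symm
  rw [Measure.restrict_apply (MeasurableSet.univ_pi fun i => (hs i))]
  rw [← Set.pi_inter_distrib]
  rw [volume_pi, Measure.pi_pi]
  exact Finset.prod_congr rfl fun i _ => by
    rw [mu0, Measure.restrict_apply (hs i)]

lemma map_pair (n : ℕ) (i j : Fin n) (hij : i ≠ j) :
    Measure.map (fun x : Fin n → ℝ => (x i, x j)) (Measure.pi fun _ => mu0)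
      = mu0.prod mu0 := by
  classical
  refine (Measure.prod_eq fun s t hs ht => ?_).symm
  rw [Measure.map_apply (by fun_prop) (hs.prod ht)]
  have hpre : (fun x : Fin n → ℝ => (x i, x j)) ⁻¹' (s ×ˢ t)
      = Set.univ.pi (Function.update (Function.update (fun _ => (Set.univ : Set ℝ)) i s) j t) := by
    ext x
    simp only [Set.mem_preimage, Set.mem_prod, Set.mem_pi, Set.mem_univ, true_implies]
    constructor
    · rintro ⟨h1, h2⟩ k
      rcases eq_or_ne k j with rfl | hkj
      · simpa using h2
      rcases eq_or_ne k i with rfl | hki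
      · simp [Function.update_of_ne hkj, h1]
      · simp [Function.update_of_ne hkj, Function.update_of_ne hki]
    · intro hk
      refine ⟨?_, ?_⟩
      · have := hk i
        simpa [Function.update_of_ne hij] using this
      · simpa using hk j
  rw [hpre, Measure.pi_pi]
  have : ∀ k, mu0 ((Function.update (Function.update (fun _ => (Set.univ : Set ℝ)) i s) j t) k)
      = Function.update (Function.update (fun _ => (1 : ENNReal)) i (mu0 s)) j (mu0 t) k := by
    intro k
    rcases eq_or_ne k j with rfl | hkj
    · simp
    rcases eq_or_ne k i with rfl | hki
    · simp [Function.update_of_ne hkj]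
    · simp [Function.update_of_ne hkj, Function.update_of_ne hki]
  rw [Finset.prod_congr rfl (fun k _ => this k)]
  rw [Finset.prod_update_of_mem (Finset.mem_univ j)]
  rw [Finset.prod_update_of_mem (Finset.mem_sdiff.mpr ⟨Finset.mem_univ i, by simp [hij]⟩)]
  simp [mul_comm]

lemma marg (n : ℕ) (i j : Fin n) (hij : i ≠ j) (G : ℝ × ℝ → ENNReal) (hG : Measurable G) :
    ∫⁻ x, G (x i, x j) ∂(Measure.pi fun _ : Fin n => mu0) = ∫⁻ p, G p ∂(mu0.prod mu0) := by
  rw [← map_pair n i j hij, lintegral_map hG (by fun_prop)]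

/-- **Hölder bound on homomorphism densities.** For a finite directed graph `m` on
`{1,…,n}` with edge set `E` (no loops) having `e = |E| ≥ 1` edges, and a graphon
`h : [0,1]² → [0,1]`, the homomorphism density satisfies
`∫_{[0,1]^n} ∏_{(i,j)∈E} h(x_i,x_j) dx ≤ ∫_{[0,1]²} h(x,y)^e dx dy`,
with equality when `e = 1`. -/
theorem stmt_9 (n : ℕ) (E : Finset (Fin n × Fin n)) (hloop : ∀ e ∈ E, e.1 ≠ e.2)
    (hE : 1 ≤ E.card) (h : ℝ → ℝ → ℝ)
    (hmeas : Measurable (Function.uncurry h))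
    (hrange : ∀ x y, h x y ∈ Set.Icc (0 : ℝ) 1) :
    (∫ x in unitCube n, ∏ e ∈ E, h (x e.1) (x e.2)) ≤
      (∫ p in unitSquare, (h p.1 p.2) ^ E.card) ∧
    (E.card = 1 →
      (∫ x in unitCube n, ∏ e ∈ E, h (x e.1) (x e.2)) =
        ∫ p in unitSquare, (h p.1 p.2) ^ E.card) := by
  classical
  set π : Measure (Fin n → ℝ) := Measure.pi fun _ : Fin n => mu0 with hπ
  have h0 : ∀ x y, 0 ≤ h x y := fun x y => (hrange x y).1
  have h1 : ∀ x y, h x y ≤ 1 := fun x y => (hrange x y).2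
  set G : ℝ × ℝ → ENNReal := fun p => ENNReal.ofReal (h p.1 p.2) ^ E.card with hG
  have hGmeas : Measurable G := by
    apply Measurable.pow_const
    exact (hmeas.comp measurable_id).ennreal_ofReal
  set A : ENNReal := ∫⁻ x, ∏ e ∈ E, ENNReal.ofReal (h (x e.1) (x e.2)) ∂π with hA
  set B : ENNReal := ∫⁻ p, G p ∂(mu0.prod mu0) with hB
  have hcompmeas : ∀ e : Fin n × Fin n, Measurable fun x : Fin n → ℝ => h (x e.1) (x e.2) := by
    intro e
    have : (fun x : Fin n → ℝ => h (x e.1) (x e.2))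
        = Function.uncurry h ∘ fun x => (x e.1, x e.2) := rfl
    rw [this]
    exact hmeas.comp ((measurable_pi_apply e.1).prodMk (measurable_pi_apply e.2))
  -- each edge integral equals B
  have hedge : ∀ e ∈ E, (∫⁻ x, ENNReal.ofReal (h (x e.1) (x e.2)) ^ E.card ∂π) = B := by
    intro e he
    have := marg n e.1 e.2 (hloop e he) G hGmeas
    simpa [hG] using this
  -- Hölder
  have hc : (E.card : ℝ) ≠ 0 := by positivity
  have key : A ≤ B := by
    have hH := ENNReal.lintegral_prod_norm_pow_le (μ := π) E
      (f := fun e x => ENNReal.ofReal (h (x e.1) (x e.2)) ^ E.card)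
      (fun e _ => ((((hcompmeas e).ennreal_ofReal).pow_const _).aemeasurable))
      (p := fun _ => (E.card : ℝ)⁻¹)
      (by rw [Finset.sum_const, nsmul_eq_mul, mul_inv_cancel₀ hc])
      (fun e _ => by positivity)
    have hsimp : ∀ (a : ENNReal), (a ^ E.card) ^ ((E.card : ℝ)⁻¹) = a := by
      intro a
      rw [← ENNReal.rpow_natCast a E.card, ← ENNReal.rpow_mul, mul_inv_cancel₀ hc,
        ENNReal.rpow_one]
    calc A = ∫⁻ x, ∏ e ∈ E, (ENNReal.ofReal (h (x e.1) (x e.2)) ^ E.card) ^ ((E.card : ℝ)⁻¹) ∂π := by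
            simp only [hsimp, hA]
      _ ≤ ∏ e ∈ E, (∫⁻ x, ENNReal.ofReal (h (x e.1) (x e.2)) ^ E.card ∂π) ^ ((E.card : ℝ)⁻¹) := hH
      _ = ∏ _e ∈ E, B ^ ((E.card : ℝ)⁻¹) := Finset.prod_congr rfl fun e he => by rw [hedge e he]
      _ = (B ^ ((E.card : ℝ)⁻¹)) ^ (E.card : ℕ) := Finset.prod_const _
      _ = B := by
            rw [← ENNReal.rpow_natCast _ E.card, ← ENNReal.rpow_mul,
              inv_mul_cancel₀ hc, ENNReal.rpow_one]
  -- equality case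
  have keyeq : E.card = 1 → A = B := by
    intro hcard
    obtain ⟨e₀, rfl⟩ := Finset.card_eq_one.mp hcard
    have he₀ : e₀ ∈ ({e₀} : Finset (Fin n × Fin n)) := Finset.mem_singleton_self e₀
    have := marg n e₀.1 e₀.2 (hloop e₀ he₀) G hGmeas
    simp only [hA, hB, hG, hcard, pow_one, Finset.prod_singleton]
    simpa [hG, hcard, pow_one] using this
  -- convert the real integrals
  have hLHS : (∫ x in unitCube n, ∏ e ∈ E, h (x e.1) (x e.2)) = A.toReal := by
    rw [unitCube, restrict_pi, ← hπ]
    rw [integral_eq_lintegral_of_nonneg_ae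
      (Filter.Eventually.of_forall fun x => Finset.prod_nonneg fun e _ => h0 _ _)
      ((Finset.measurable_prod E fun e _ => hcompmeas e).aestronglyMeasurable)]
    congr 1
    refine lintegral_congr fun x => ?_
    rw [ENNReal.ofReal_prod_of_nonneg fun e _ => h0 _ _]
  have hRHS : (∫ p in unitSquare, (h p.1 p.2) ^ E.card) = B.toReal := by
    have hsq : (volume : Measure (ℝ × ℝ)).restrict unitSquare = mu0.prod mu0 := by
      rw [unitSquare, Measure.volume_eq_prod, ← Measure.prod_restrict]
      rfl
    rw [hsq]
    rw [integral_eq_lintegral_of_nonneg_ae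
      (Filter.Eventually.of_forall fun p => pow_nonneg (h0 _ _) _)
      ((hmeas.pow_const _).aestronglyMeasurable)]
    congr 1
    refine lintegral_congr fun p => ?_
    rw [ENNReal.ofReal_pow (h0 _ _)]
  have hBtop : B ≠ ⊤ := by
    have hle : B ≤ 1 := by
      have : ∀ p : ℝ × ℝ, G p ≤ 1 := fun p =>
        pow_le_one' (ENNReal.ofReal_le_one.mpr (h1 _ _)) _
      calc B ≤ ∫⁻ _, 1 ∂(mu0.prod mu0) := lintegral_mono this
        _ = 1 := by simp
    exact (lt_of_le_of_lt hle ENNReal.one_lt_top).ne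
  refine ⟨?_, ?_⟩
  · rw [hLHS, hRHS]
    exact ENNReal.toReal_mono hBtop key
  · intro hcard
    rw [hLHS, hRHS, keyeq hcard]
end

section
/- Let m be a finite directed graph on vertex set {1,...,n} with edge set E ⊆ {(i,j) : i ≠ j} having e = |E| ≥ 1 edges, and for each edge (i,j) ∈ E let f_{ij} : [0,1]² → [0,1] be measurable. Then ∫_{[0,1]^n} ∏_{(i,j)∈E} f_{ij}(x_i, x_j) dx_1⋯dx_n ≤ ∏_{(i,j)∈E} ‖f_{ij}‖_{L^e([0,1]²)}, where ‖f‖_{L^e} = (∫_{[0,1]²} f(x,y)^e dx dy)^{1/e}. -/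
open MeasureTheory

lemma restrict_cube_eq_pi (n : ℕ) :
    (volume : Measure (Fin n → ℝ)).restrict (unitCube n)
      = Measure.pi (fun _ : Fin n => (volume : Measure ℝ).restrict (Set.Icc 0 1)) := by
  refine (Measure.pi_eq fun s hs => ?_).symm
  rw [Measure.restrict_apply (MeasurableSet.univ_pi hs), unitCube, ← Set.pi_inter_distrib,
    volume_pi, Measure.pi_pi]
  exact Finset.prod_congr rfl fun i _ => (Measure.restrict_apply (hs i)).symm

lemma map_pair_eq {n : ℕ} (i j : Fin n) (hij : i ≠ j) :
    Measure.map (fun x : Fin n → ℝ => (x i, x j))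
      (Measure.pi (fun _ : Fin n => (volume : Measure ℝ).restrict (Set.Icc 0 1)))
      = (volume : Measure (ℝ × ℝ)).restrict unitSquare := by
  classical
  set ν : Measure ℝ := (volume : Measure ℝ).restrict (Set.Icc 0 1) with hν
  have hprob : IsProbabilityMeasure ν := ⟨by simp [hν]⟩
  have hsq : (volume : Measure (ℝ × ℝ)).restrict unitSquare = ν.prod ν := by
    rw [hν, Measure.prod_restrict, unitSquare, ← Measure.volume_eq_prod]
  rw [hsq]
  refine (Measure.prod_eq fun s t hs ht => ?_).symm
  rw [Measure.map_apply ((measurable_pi_apply i).prodMk (measurable_pi_apply j))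
    (hs.prod ht)]
  set F : Fin n → Set ℝ := fun k => if k = i then s else if k = j then t else Set.univ with hF
  have hpre : (fun x : Fin n → ℝ => (x i, x j)) ⁻¹' (s ×ˢ t) = Set.univ.pi F := by
    ext x
    simp only [Set.mem_preimage, Set.mem_prod, Set.mem_univ_pi, hF]
    constructor
    · rintro ⟨h1, h2⟩ k
      split_ifs with h h'
      · subst h; exact h1
      · subst h'; exact h2
      · trivial
    · intro h
      refine ⟨?_, ?_⟩
      · simpa using h i
      · have := h j
        rwa [if_neg hij.symm, if_pos rfl] at this
  rw [hpre, Measure.pi_pi]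
  have hrest : ∏ k ∈ (Finset.univ.erase i).erase j, ν (F k) = 1 := by
    refine Finset.prod_eq_one fun k hk => ?_
    obtain ⟨hkj, hk'⟩ := Finset.mem_erase.mp hk
    obtain ⟨hki, -⟩ := Finset.mem_erase.mp hk'
    simp [hF, hki, hkj]
  have hj : j ∈ Finset.univ.erase i := Finset.mem_erase.mpr ⟨hij.symm, Finset.mem_univ j⟩
  rw [← Finset.mul_prod_erase Finset.univ _ (Finset.mem_univ i),
    ← Finset.mul_prod_erase _ _ hj, hrest, mul_one]
  simp [hF, hij.symm]

lemma lintegral_pair {n : ℕ} (i j : Fin n) (hij : i ≠ j) {h : ℝ × ℝ → ENNReal}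
    (hh : Measurable h) :
    ∫⁻ x in unitCube n, h (x i, x j) = ∫⁻ p in unitSquare, h p := by
  rw [restrict_cube_eq_pi, ← map_pair_eq i j hij,
    lintegral_map hh ((measurable_pi_apply i).prodMk (measurable_pi_apply j))]

/-- **Graph-indexed Hölder inequality.** For a finite directed graph on `{1,…,n}` with
loopless edge set `E`, `e = |E| ≥ 1`, and measurable `f_{ij} : [0,1]² → [0,1]` for each
edge, `∫_{[0,1]^n} ∏_{(i,j)∈E} f_{ij}(x_i,x_j) dx ≤ ∏_{(i,j)∈E} ‖f_{ij}‖_{L^e([0,1]²)}`,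
where `‖f‖_{L^e} = (∫_{[0,1]²} f(x,y)^e dx dy)^{1/e}`. -/
theorem stmt_10 (n : ℕ) (E : Finset (Fin n × Fin n)) (hloop : ∀ e ∈ E, e.1 ≠ e.2)
    (hE : 1 ≤ E.card) (f : Fin n × Fin n → ℝ → ℝ → ℝ)
    (hmeas : ∀ e ∈ E, Measurable (Function.uncurry (f e)))
    (hrange : ∀ e ∈ E, ∀ x y, f e x y ∈ Set.Icc (0 : ℝ) 1) :
    (∫ x in unitCube n, ∏ e ∈ E, f e (x e.1) (x e.2)) ≤
      ∏ e ∈ E, (∫ p in unitSquare, (f e p.1 p.2) ^ E.card) ^ ((E.card : ℝ)⁻¹) := by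
  classical
  set c := E.card with hc
  have hc0 : (c : ℝ) ≠ 0 := Nat.cast_ne_zero.mpr (Nat.one_le_iff_ne_zero.mp hE)
  have hgmeas : ∀ e ∈ E, Measurable fun x : Fin n → ℝ => f e (x e.1) (x e.2) := fun e he => by
    have : Measurable (Function.uncurry (f e) ∘ fun x : Fin n → ℝ => (x e.1, x e.2)) :=
      (hmeas e he).comp ((measurable_pi_apply e.1).prodMk (measurable_pi_apply e.2))
    exact this
  set g : Fin n × Fin n → (Fin n → ℝ) → ENNReal :=
    fun e x => ENNReal.ofReal (f e (x e.1) (x e.2)) with hg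
  -- the left-hand side as a lintegral
  have h1 : (∫ x in unitCube n, ∏ e ∈ E, f e (x e.1) (x e.2))
      = (∫⁻ x in unitCube n, ∏ e ∈ E, g e x).toReal := by
    rw [integral_eq_lintegral_of_nonneg_ae
        (Filter.Eventually.of_forall fun x =>
          Finset.prod_nonneg fun e he => (hrange e he _ _).1)
        ((Finset.measurable_prod E fun e he => hgmeas e he).aestronglyMeasurable)]
    congr 1
    refine lintegral_congr fun x => ?_
    exact ENNReal.ofReal_prod_of_nonneg fun e he => (hrange e he _ _).1
  -- Hölder
  have hrpow : ∀ a : ENNReal, (a ^ c) ^ ((c : ℝ)⁻¹) = a := fun a => by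
    rw [← ENNReal.rpow_natCast a c, ← ENNReal.rpow_mul, mul_inv_cancel₀ hc0,
      ENNReal.rpow_one]
  have h2 : (∫⁻ x in unitCube n, ∏ e ∈ E, g e x)
      ≤ ∏ e ∈ E, (∫⁻ x in unitCube n, g e x ^ c) ^ ((c : ℝ)⁻¹) := by
    have := ENNReal.lintegral_prod_norm_pow_le (μ := volume.restrict (unitCube n)) E
      (f := fun e x => g e x ^ c)
      (fun e he => (((hgmeas e he).ennreal_ofReal).pow_const c).aemeasurable)
      (p := fun _ => (c : ℝ)⁻¹)
      (by simp [Finset.sum_const, ← hc, mul_inv_cancel₀ hc0])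
      (fun e he => by positivity)
    simpa only [hrpow] using this
  -- change of variables for each factor
  have h3 : ∀ e ∈ E, (∫⁻ x in unitCube n, g e x ^ c)
      = ∫⁻ p in unitSquare, ENNReal.ofReal (f e p.1 p.2) ^ c := fun e he =>
    lintegral_pair e.1 e.2 (hloop e he)
      (((hmeas e he).ennreal_ofReal).pow_const c)
  -- finiteness
  have h4 : ∀ e ∈ E, (∫⁻ p in unitSquare, ENNReal.ofReal (f e p.1 p.2) ^ c) ≤ 1 := by
    intro e he
    have hb : ∀ p : ℝ × ℝ, ENNReal.ofReal (f e p.1 p.2) ^ c ≤ 1 := fun p =>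
      pow_le_one₀ (by positivity) (ENNReal.ofReal_le_one.mpr (hrange e he _ _).2)
    calc (∫⁻ p in unitSquare, ENNReal.ofReal (f e p.1 p.2) ^ c)
        ≤ ∫⁻ _ in unitSquare, 1 := lintegral_mono fun p => hb p
      _ = volume unitSquare := by simp
      _ = 1 := by
          rw [unitSquare, Measure.volume_eq_prod, Measure.prod_prod, Real.volume_Icc]
          norm_num
  have h4' : ∀ e ∈ E, (∫⁻ p in unitSquare, ENNReal.ofReal (f e p.1 p.2) ^ c) ≠ ⊤ :=
    fun e he => ((h4 e he).trans_lt ENNReal.one_lt_top).ne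
  -- right-hand side factors as lintegrals
  have h5 : ∀ e ∈ E, (∫ p in unitSquare, (f e p.1 p.2) ^ c)
      = (∫⁻ p in unitSquare, ENNReal.ofReal (f e p.1 p.2) ^ c).toReal := by
    intro e he
    rw [integral_eq_lintegral_of_nonneg_ae
        (Filter.Eventually.of_forall fun p => pow_nonneg (hrange e he _ _).1 c)
        ((((hmeas e he).pow_const c).aestronglyMeasurable))]
    congr 1
    exact lintegral_congr fun p => ENNReal.ofReal_pow (hrange e he _ _).1 c
  -- combine
  have hfin : (∏ e ∈ E, (∫⁻ p in unitSquare, ENNReal.ofReal (f e p.1 p.2) ^ c)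
      ^ ((c : ℝ)⁻¹)) ≠ ⊤ := by
    refine (ENNReal.prod_lt_top fun e he => ?_).ne
    exact ENNReal.rpow_lt_top_of_nonneg (by positivity) (h4' e he)
  have key : (∫⁻ x in unitCube n, ∏ e ∈ E, g e x).toReal
      ≤ (∏ e ∈ E, (∫⁻ p in unitSquare, ENNReal.ofReal (f e p.1 p.2) ^ c)
        ^ ((c : ℝ)⁻¹)).toReal := by
    refine ENNReal.toReal_mono hfin ?_
    refine h2.trans_eq ?_
    exact Finset.prod_congr rfl fun e he => by rw [h3 e he]
  rw [h1]
  refine key.trans_eq ?_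
  rw [ENNReal.toReal_prod]
  refine Finset.prod_congr rfl fun e he => ?_
  rw [h5 e he, ENNReal.toReal_rpow]
end

section
/- Let Θ = {0, 1/L, ..., (L−1)/L} with distance D(θ,θ') = min(|θ−θ'|, 1−|θ−θ'|), let w ∈ Δ(Θ) have full support, and fix v, γ > 0, σ ∈ (0,1), β = (1−σ)/σ. Define the trade objective over ψ : Θ² → [0,1]: F(ψ) = Σ_{θ,θ'∈Θ} w_θ w_{θ'} [ β( (v/2) ψ_{θθ'} ψ_{θ'θ} − γ ψ_{θθ'} D(θ,θ') ) + H(ψ_{θθ'}) ]. Suppose F has a unique maximizer ψ*. Then ψ* is symmetric (ψ*_{θθ'} = ψ*_{θ'θ}), and for each pair (θ,θ'), ψ*_{θθ'} is a stationary point of the function ρ ↦ β(−γ D(θ,θ') ρ + (v/2) ρ²) + H(ρ) on (0,1), i.e. it satisfies β(v ψ*_{θθ'} − γ D(θ,θ')) + H'(ψ*_{θθ'}) = 0, which is the first-order condition of the motif problem max_{ρ∈[0,1]} [β(a₁ρ + (a₂/2)ρ²) + H(ρ)] with a₁ = −γD(θ,θ') and a₂ = v. -/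
/-- The circular distance between locations `θ/L` and `θ'/L` on the circle of unit
circumference: `D(θ,θ') = min(|θ−θ'|, 1−|θ−θ'|)`. -/
noncomputable def circleDist {L : ℕ} (θ θ' : Fin L) : ℝ :=
  min |(θ : ℝ) / L - (θ' : ℝ) / L| (1 - |(θ : ℝ) / L - (θ' : ℝ) / L|)

/-- The Bernoulli entropy `H(p) = −p log p − (1−p) log(1−p)`, extended by `0` at the
endpoints. -/
noncomputable def bernoulliEntropy (p : ℝ) : ℝ :=
  Real.negMulLog p + Real.negMulLog (1 - p)

/-- The trade objective
`F(ψ) = ∑_{θ,θ'} w_θ w_{θ'} [β((v/2)ψ_{θθ'}ψ_{θ'θ} − γ ψ_{θθ'}D(θ,θ')) + H(ψ_{θθ'})]`. -/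
noncomputable def tradeObjective {L : ℕ} (w : Fin L → ℝ) (v γ β : ℝ)
    (ψ : Fin L → Fin L → ℝ) : ℝ :=
  ∑ θ : Fin L, ∑ θ' : Fin L, w θ * w θ' *
    (β * (v / 2 * ψ θ θ' * ψ θ' θ - γ * ψ θ θ' * circleDist θ θ') +
      bernoulliEntropy (ψ θ θ'))

lemma circleDist_nonneg {L : ℕ} (hL : 0 < L) (θ θ' : Fin L) : 0 ≤ circleDist θ θ' := by
  have hLpos : (0:ℝ) < L := by exact_mod_cast hL
  have h1 : (θ : ℝ) / L < 1 := by
    rw [div_lt_one hLpos]; exact_mod_cast θ.isLt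
  have h2 : (θ' : ℝ) / L < 1 := by
    rw [div_lt_one hLpos]; exact_mod_cast θ'.isLt
  have h3 : (0:ℝ) ≤ (θ : ℝ) / L := by positivity
  have h4 : (0:ℝ) ≤ (θ' : ℝ) / L := by positivity
  have ha : |(θ : ℝ) / L - (θ' : ℝ) / L| < 1 :=
    abs_sub_lt_iff.2 ⟨by linarith, by linarith⟩
  exact le_min (abs_nonneg _) (by linarith)

lemma circleDist_le_one {L : ℕ} (θ θ' : Fin L) : circleDist θ θ' ≤ 1 := by
  have := abs_nonneg ((θ : ℝ) / L - (θ' : ℝ) / L)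
  exact le_trans (min_le_right _ _) (by linarith)

lemma circleDist_symm {L : ℕ} (θ θ' : Fin L) : circleDist θ θ' = circleDist θ' θ := by
  unfold circleDist; rw [abs_sub_comm]

lemma diag_diff {L : ℕ} (w : Fin L → ℝ) (v γ β : ℝ) (ψs : Fin L → Fin L → ℝ)
    (θ : Fin L) (x : ℝ) :
    tradeObjective w v γ β (fun a b => if a = θ ∧ b = θ then x else ψs a b) -
      tradeObjective w v γ β ψs =
    w θ * w θ * ((β * (v / 2 * x * x - γ * x * circleDist θ θ) + bernoulliEntropy x) -
      (β * (v / 2 * ψs θ θ * ψs θ θ - γ * ψs θ θ * circleDist θ θ) +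
        bernoulliEntropy (ψs θ θ))) := by
  classical
  unfold tradeObjective
  rw [← Finset.sum_sub_distrib]
  simp only [← Finset.sum_sub_distrib]
  rw [Finset.sum_eq_single_of_mem θ (Finset.mem_univ θ)]
  · rw [Finset.sum_eq_single_of_mem θ (Finset.mem_univ θ)]
    · rw [if_pos ⟨rfl, rfl⟩]; ring
    · intro b _ hb
      have h1 : ¬(θ = θ ∧ b = θ) := fun h => hb h.2
      have h2 : ¬(b = θ ∧ θ = θ) := fun h => hb h.1
      rw [if_neg h1, if_neg h2]; ring
  · intro a _ ha
    apply Finset.sum_eq_zero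
    intro b _
    have h1 : ¬(a = θ ∧ b = θ) := fun h => ha h.1
    have h2 : ¬(b = θ ∧ a = θ) := fun h => ha h.2
    rw [if_neg h1, if_neg h2]; ring

lemma offdiag_diff {L : ℕ} (w : Fin L → ℝ) (v γ β : ℝ) (ψs : Fin L → Fin L → ℝ)
    (θ θ' : Fin L) (hne : θ ≠ θ') (x : ℝ) :
    tradeObjective w v γ β (fun a b => if a = θ ∧ b = θ' then x else ψs a b) -
      tradeObjective w v γ β ψs =
    w θ * w θ' * ((β * (v * ψs θ' θ * x - γ * x * circleDist θ θ') + bernoulliEntropy x) -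
      (β * (v * ψs θ' θ * ψs θ θ' - γ * ψs θ θ' * circleDist θ θ') +
        bernoulliEntropy (ψs θ θ'))) := by
  classical
  unfold tradeObjective
  rw [← Finset.sum_sub_distrib]
  simp only [← Finset.sum_sub_distrib]
  have hvanish : ∀ a ∈ Finset.univ, a ∉ ({θ, θ'} : Finset (Fin L)) →
      (∑ b : Fin L,
        (w a * w b * (β * (v / 2 * (if a = θ ∧ b = θ' then x else ψs a b) *
            (if b = θ ∧ a = θ' then x else ψs b a) -
            γ * (if a = θ ∧ b = θ' then x else ψs a b) * circleDist a b) +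
          bernoulliEntropy (if a = θ ∧ b = θ' then x else ψs a b)) -
        w a * w b * (β * (v / 2 * ψs a b * ψs b a - γ * ψs a b * circleDist a b) +
          bernoulliEntropy (ψs a b)))) = 0 := by
    intro a _ ha
    simp only [Finset.mem_insert, Finset.mem_singleton, not_or] at ha
    apply Finset.sum_eq_zero
    intro b _
    have h1 : ¬(a = θ ∧ b = θ') := fun h => ha.1 h.1
    have h2 : ¬(b = θ ∧ a = θ') := fun h => ha.2 h.2
    rw [if_neg h1, if_neg h2]; ring
  rw [← Finset.sum_subset (Finset.subset_univ ({θ, θ'} : Finset (Fin L))) hvanish,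
    Finset.sum_pair hne]
  rw [Finset.sum_eq_single_of_mem θ' (Finset.mem_univ θ')]
  · rw [Finset.sum_eq_single_of_mem θ (Finset.mem_univ θ)]
    · have h1 : ¬(θ' = θ ∧ θ = θ') := fun h => hne h.1.symm
      have h2 : (θ = θ ∧ θ' = θ') := ⟨rfl, rfl⟩
      rw [if_pos h2, if_neg h1]; ring
    · intro b _ hb
      have h1 : ¬(θ' = θ ∧ b = θ') := fun h => hne h.1.symm
      have h2 : ¬(b = θ ∧ θ' = θ') := fun h => hb h.1
      rw [if_neg h1, if_neg h2]; ring
  · intro b _ hb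
    have h1 : ¬(θ = θ ∧ b = θ') := fun h => hb h.2
    have h2 : ¬(b = θ ∧ θ = θ') := fun h => hne h.2
    rw [if_neg h1, if_neg h2]; ring

lemma bern_hasDeriv {x : ℝ} (hx : x ∈ Set.Ioo (0:ℝ) 1) :
    HasDerivAt bernoulliEntropy (Real.log ((1 - x) / x)) x := by
  have h1 : HasDerivAt Real.negMulLog (-Real.log x - 1) x :=
    Real.hasDerivAt_negMulLog (ne_of_gt hx.1)
  have hx1 : (1 : ℝ) - x ≠ 0 := by have := hx.2; intro h; linarith [h]
  have h2 : HasDerivAt (fun p : ℝ => Real.negMulLog (1 - p))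
      ((-Real.log (1 - x) - 1) * (-1)) x :=
    (Real.hasDerivAt_negMulLog hx1).comp x ((hasDerivAt_id x).const_sub 1)
  have h := h1.add h2
  have heq : Real.log ((1 - x) / x) = (-Real.log x - 1) + (-Real.log (1 - x) - 1) * (-1) := by
    rw [Real.log_div hx1 (ne_of_gt hx.1)]; ring
  rw [heq]
  exact h

lemma foc_single (q q' : ℝ → ℝ) (hq : ∀ x, HasDerivAt q (q' x) x)
    (M : ℝ) (hM : ∀ x ∈ Set.Icc (0:ℝ) 1, |q' x| ≤ M)
    (ρ : ℝ) (hρ : ρ ∈ Set.Icc (0:ℝ) 1)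
    (hmax : ∀ x ∈ Set.Icc (0:ℝ) 1, q x + bernoulliEntropy x ≤ q ρ + bernoulliEntropy ρ) :
    ρ ∈ Set.Ioo (0:ℝ) 1 ∧ q' ρ + Real.log ((1 - ρ) / ρ) = 0 := by
  set f : ℝ → ℝ := fun x => q x + bernoulliEntropy x with hf
  have hfc : Continuous f := by
    apply Continuous.add
    · exact continuous_iff_continuousAt.2 fun x => (hq x).continuousAt
    · exact Real.continuous_negMulLog.add
        (Real.continuous_negMulLog.comp (continuous_const.sub continuous_id))
  have hf' : ∀ x ∈ Set.Ioo (0:ℝ) 1, HasDerivAt f (q' x + Real.log ((1 - x) / x)) x :=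
    fun x hx => (hq x).add (bern_hasDeriv hx)
  have hM0 : 0 ≤ M := le_trans (abs_nonneg _) (hM 0 ⟨le_refl _, zero_le_one⟩)
  have hlog2 : Real.log 2 < 1 := by
    have := Real.log_two_lt_d9; linarith
  -- interior on the left
  have hρ0 : 0 < ρ := by
    rcases lt_or_eq_of_le hρ.1 with h | h
    · exact h
    exfalso
    set t : ℝ := min (1/2) (Real.exp (-(M+1))) with htdef
    have ht0 : 0 < t := lt_min (by norm_num) (Real.exp_pos _)
    have hth : t ≤ 1/2 := min_le_left _ _
    have hte : t ≤ Real.exp (-(M+1)) := min_le_right _ _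
    obtain ⟨ξ, hξ, hslope⟩ := exists_hasDerivAt_eq_slope f
      (fun x => q' x + Real.log ((1 - x) / x)) ht0 hfc.continuousOn
      (fun x hx => hf' x ⟨hx.1, lt_of_lt_of_le hx.2 (by linarith)⟩)
    have hξI : ξ ∈ Set.Icc (0:ℝ) 1 := ⟨hξ.1.le, by linarith [hξ.2]⟩
    have hq'ξ : -M ≤ q' ξ := neg_le_of_abs_le (hM ξ hξI)
    have hξhalf : ξ ≤ 1/2 := le_of_lt (lt_of_lt_of_le hξ.2 hth)
    have hlogξ : Real.log ξ < -(M+1) := by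
      calc Real.log ξ < Real.log t := Real.log_lt_log hξ.1 hξ.2
        _ ≤ Real.log (Real.exp (-(M+1))) := Real.log_le_log ht0 hte
        _ = -(M+1) := Real.log_exp _
    have hlog1ξ : Real.log (1/2) ≤ Real.log (1 - ξ) :=
      Real.log_le_log (by norm_num) (by linarith)
    have hlhalf : Real.log (1/2) = -Real.log 2 := by
      rw [Real.log_div one_ne_zero two_ne_zero, Real.log_one]; ring
    have hpos : 0 < q' ξ + Real.log ((1 - ξ) / ξ) := by
      rw [Real.log_div (by linarith : (1:ℝ) - ξ ≠ 0) (ne_of_gt hξ.1)]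
      have : -Real.log 2 ≤ Real.log (1 - ξ) := by rw [← hlhalf]; exact hlog1ξ
      linarith
    rw [hslope] at hpos
    have hft : f t ≤ f ρ := hmax t ⟨ht0.le, by linarith⟩
    rw [← h] at hft
    have : 0 < (f t - f 0) / (t - 0) := hpos
    rw [sub_zero] at this
    rcases div_pos_iff.mp this with ⟨h1, h2⟩ | ⟨h1, h2⟩ <;> linarith
  have hρ1 : ρ < 1 := by
    rcases lt_or_eq_of_le hρ.2 with h | h
    · exact h
    exfalso
    set t : ℝ := max (1/2) (1 - Real.exp (-(M+1))) with htdef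
    have ht1 : t < 1 := max_lt (by norm_num) (by linarith [Real.exp_pos (-(M+1))])
    have hth : 1/2 ≤ t := le_max_left _ _
    have hte : 1 - Real.exp (-(M+1)) ≤ t := le_max_right _ _
    obtain ⟨ξ, hξ, hslope⟩ := exists_hasDerivAt_eq_slope f
      (fun x => q' x + Real.log ((1 - x) / x)) ht1 hfc.continuousOn
      (fun x hx => hf' x ⟨by linarith [hx.1], hx.2⟩)
    have hξI : ξ ∈ Set.Icc (0:ℝ) 1 := ⟨by linarith [hξ.1], hξ.2.le⟩
    have hξ0 : 0 < ξ := by linarith [hξ.1]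
    have hξ1 : ξ < 1 := hξ.2
    have hq'ξ : q' ξ ≤ M := le_of_abs_le (hM ξ hξI)
    have hξhalf : 1/2 ≤ ξ := by linarith [hξ.1]
    have hlog1ξ : Real.log (1 - ξ) < -(M+1) := by
      calc Real.log (1 - ξ) < Real.log (Real.exp (-(M+1))) := by
            apply Real.log_lt_log (by linarith)
            linarith [hξ.1]
        _ = -(M+1) := Real.log_exp _
    have hlogξ : Real.log (1/2) ≤ Real.log ξ := Real.log_le_log (by norm_num) hξhalf
    have hlhalf : Real.log (1/2) = -Real.log 2 := by
      rw [Real.log_div one_ne_zero two_ne_zero, Real.log_one]; ring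
    have hneg : q' ξ + Real.log ((1 - ξ) / ξ) < 0 := by
      rw [Real.log_div (by linarith : (1:ℝ) - ξ ≠ 0) (ne_of_gt hξ0)]
      have : -Real.log 2 ≤ Real.log ξ := by rw [← hlhalf]; exact hlogξ
      linarith
    rw [hslope] at hneg
    have hft : f t ≤ f ρ := hmax t ⟨by linarith, ht1.le⟩
    rw [h] at hft
    have : (f 1 - f t) / (1 - t) < 0 := hneg
    rcases div_neg_iff.mp this with ⟨h1, h2⟩ | ⟨h1, h2⟩ <;> linarith
  refine ⟨⟨hρ0, hρ1⟩, ?_⟩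
  have hloc : IsLocalMax f ρ := by
    filter_upwards [Icc_mem_nhds hρ0 hρ1] with x hx using hmax x hx
  exact hloc.hasDerivAt_eq_zero (hf' ρ ⟨hρ0, hρ1⟩)

/-- **Lemma 3 (first-order conditions in the spatial trade model).** If the trade
objective has a unique maximizer `ψ*` over kernels `ψ : Θ² → [0,1]`, then `ψ*` is
symmetric and, for each pair `(θ,θ')`, `ψ*_{θθ'}` is interior and satisfies the
first-order condition `β(v ψ*_{θθ'} − γ D(θ,θ')) + H'(ψ*_{θθ'}) = 0`, i.e. the FOC of
the two-motif problem with values `a₁ = −γD(θ,θ')` and `a₂ = v`. -/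
theorem stmt_15 (L : ℕ) (hL : 0 < L) (w : Fin L → ℝ)
    (hwpos : ∀ θ, 0 < w θ) (hwsum : ∑ θ, w θ = 1)
    (v γ σ : ℝ) (hv : 0 < v) (hγ : 0 < γ) (hσ : σ ∈ Set.Ioo (0 : ℝ) 1)
    (β : ℝ) (hβ : β = (1 - σ) / σ)
    (ψs : Fin L → Fin L → ℝ)
    (hmem : ∀ θ θ', ψs θ θ' ∈ Set.Icc (0 : ℝ) 1)
    (hmax : ∀ ψ : Fin L → Fin L → ℝ, (∀ θ θ', ψ θ θ' ∈ Set.Icc (0 : ℝ) 1) →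
      tradeObjective w v γ β ψ ≤ tradeObjective w v γ β ψs)
    (huniq : ∀ ψ : Fin L → Fin L → ℝ, (∀ θ θ', ψ θ θ' ∈ Set.Icc (0 : ℝ) 1) →
      (∀ ψ' : Fin L → Fin L → ℝ, (∀ θ θ', ψ' θ θ' ∈ Set.Icc (0 : ℝ) 1) →
        tradeObjective w v γ β ψ' ≤ tradeObjective w v γ β ψ) → ψ = ψs) :
    (∀ θ θ', ψs θ θ' = ψs θ' θ) ∧
    (∀ θ θ', ψs θ θ' ∈ Set.Ioo (0 : ℝ) 1 ∧
      β * (v * ψs θ θ' - γ * circleDist θ θ') +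
        Real.log ((1 - ψs θ θ') / ψs θ θ') = 0) := by
  have hβpos : 0 < β := by
    rw [hβ]; exact div_pos (by linarith [hσ.2]) hσ.1
  -- symmetry of the maximizer
  have hsymm : ∀ a b, ψs a b = ψs b a := by
    have hTobj : tradeObjective w v γ β (fun a b => ψs b a) = tradeObjective w v γ β ψs := by
      unfold tradeObjective
      rw [Finset.sum_comm]
      refine Finset.sum_congr rfl fun a _ => Finset.sum_congr rfl fun b _ => ?_
      rw [circleDist_symm b a]; ring
    have huq := huniq (fun a b => ψs b a) (fun a b => hmem b a)
      (fun ψ' h' => hTobj ▸ hmax ψ' h')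
    intro a b
    exact congrFun (congrFun huq b) a
  refine ⟨hsymm, fun θ θ' => ?_⟩
  by_cases hcase : θ = θ'
  · subst hcase
    have hD0 := circleDist_nonneg hL θ θ
    have hD1 := circleDist_le_one θ θ
    have hqd : ∀ y : ℝ, HasDerivAt (fun x => β * (v / 2 * x * x - γ * x * circleDist θ θ))
        ((fun x => β * (v * x - γ * circleDist θ θ)) y) y := by
      intro y
      have h : HasDerivAt (fun x : ℝ => β * (v / 2 * x * x - γ * x * circleDist θ θ))
          (β * ((v / 2 * 1) * y + (v / 2 * y) * 1 - (γ * 1) * circleDist θ θ)) y := by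
        apply HasDerivAt.const_mul
        exact (((hasDerivAt_id y).const_mul (v / 2)).mul (hasDerivAt_id y)).sub
          (((hasDerivAt_id y).const_mul γ).mul_const (circleDist θ θ))
      have heq : (fun x => β * (v * x - γ * circleDist θ θ)) y
          = β * ((v / 2 * 1) * y + (v / 2 * y) * 1 - (γ * 1) * circleDist θ θ) := by ring
      rw [heq]; exact h
    have hMb : ∀ x ∈ Set.Icc (0:ℝ) 1,
        |(fun x => β * (v * x - γ * circleDist θ θ)) x| ≤ β * (v + γ) := by
      intro x hx
      simp only [abs_le]
      refine ⟨?_, ?_⟩ <;>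
        nlinarith [mul_nonneg (mul_nonneg hβpos.le hv.le) hx.1,
          mul_nonneg (mul_nonneg hβpos.le hγ.le) (sub_nonneg.2 hD1),
          mul_nonneg (mul_nonneg hβpos.le hγ.le) hD0,
          mul_le_mul_of_nonneg_left hx.2 (mul_nonneg hβpos.le hv.le),
          mul_pos hβpos hv, mul_pos hβpos hγ]
    have hQmax : ∀ x ∈ Set.Icc (0:ℝ) 1,
        β * (v / 2 * x * x - γ * x * circleDist θ θ) + bernoulliEntropy x ≤
        β * (v / 2 * ψs θ θ * ψs θ θ - γ * ψs θ θ * circleDist θ θ) +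
          bernoulliEntropy (ψs θ θ) := by
      intro x hx
      have hmem' : ∀ a b, (fun a b => if a = θ ∧ b = θ then x else ψs a b) a b
          ∈ Set.Icc (0:ℝ) 1 := by
        intro a b; dsimp only; split_ifs
        · exact hx
        · exact hmem a b
      have hle := hmax _ hmem'
      have hd := diag_diff w v γ β ψs θ x
      nlinarith [mul_pos (hwpos θ) (hwpos θ)]
    obtain ⟨hIoo, hfoc⟩ := foc_single
      (fun x => β * (v / 2 * x * x - γ * x * circleDist θ θ))
      (fun x => β * (v * x - γ * circleDist θ θ))
      hqd (β * (v + γ)) hMb (ψs θ θ) (hmem θ θ) hQmax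
    exact ⟨hIoo, hfoc⟩
  · have hD0 := circleDist_nonneg hL θ θ'
    have hD1 := circleDist_le_one θ θ'
    have hs := hmem θ' θ
    have hqd : ∀ y : ℝ, HasDerivAt
        (fun x => β * (v * ψs θ' θ * x - γ * x * circleDist θ θ'))
        ((fun _ : ℝ => β * (v * ψs θ' θ - γ * circleDist θ θ')) y) y := by
      intro y
      have h : HasDerivAt (fun x : ℝ => β * (v * ψs θ' θ * x - γ * x * circleDist θ θ'))
          (β * ((v * ψs θ' θ) * 1 - (γ * 1) * circleDist θ θ')) y := by
        apply HasDerivAt.const_mul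
        exact (((hasDerivAt_id y).const_mul (v * ψs θ' θ))).sub
          (((hasDerivAt_id y).const_mul γ).mul_const (circleDist θ θ'))
      have heq : (fun _ : ℝ => β * (v * ψs θ' θ - γ * circleDist θ θ')) y
          = β * ((v * ψs θ' θ) * 1 - (γ * 1) * circleDist θ θ') := by ring
      rw [heq]; exact h
    have hMb : ∀ x ∈ Set.Icc (0:ℝ) 1,
        |(fun _ : ℝ => β * (v * ψs θ' θ - γ * circleDist θ θ')) x| ≤ β * (v + γ) := by
      intro x _
      simp only [abs_le]
      refine ⟨?_, ?_⟩ <;>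
        nlinarith [mul_nonneg (mul_nonneg hβpos.le hv.le) hs.1,
          mul_nonneg (mul_nonneg hβpos.le hγ.le) (sub_nonneg.2 hD1),
          mul_nonneg (mul_nonneg hβpos.le hγ.le) hD0,
          mul_le_mul_of_nonneg_left hs.2 (mul_nonneg hβpos.le hv.le),
          mul_pos hβpos hv, mul_pos hβpos hγ]
    have hQmax : ∀ x ∈ Set.Icc (0:ℝ) 1,
        β * (v * ψs θ' θ * x - γ * x * circleDist θ θ') + bernoulliEntropy x ≤
        β * (v * ψs θ' θ * ψs θ θ' - γ * ψs θ θ' * circleDist θ θ') +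
          bernoulliEntropy (ψs θ θ') := by
      intro x hx
      have hmem' : ∀ a b, (fun a b => if a = θ ∧ b = θ' then x else ψs a b) a b
          ∈ Set.Icc (0:ℝ) 1 := by
        intro a b; dsimp only; split_ifs
        · exact hx
        · exact hmem a b
      have hle := hmax _ hmem'
      have hd := offdiag_diff w v γ β ψs θ θ' hcase x
      nlinarith [mul_pos (hwpos θ) (hwpos θ')]
    obtain ⟨hIoo, hfoc⟩ := foc_single
      (fun x => β * (v * ψs θ' θ * x - γ * x * circleDist θ θ'))
      (fun _ : ℝ => β * (v * ψs θ' θ - γ * circleDist θ θ'))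
      hqd (β * (v + γ)) hMb (ψs θ θ') (hmem θ θ') hQmax
    rw [hsymm θ' θ] at hfoc
    exact ⟨hIoo, hfoc⟩
end

section
/- There exists a constant C₀ > 0 such that for every η ∈ (0,1) and every directed graph G on N vertices with adjacency matrix B ∈ {0,1}^{N×N}, there exists a partition P of {1,...,N} into k ≤ exp(C₀/η²) classes such that, letting B_P be the matrix obtained by replacing each entry B_{ij} with the average of B over the block P(i) × P(j) containing (i,j), the cut norm satisfies (1/N²) · max_{S,T ⊆ {1,...,N}} | Σ_{i∈S, j∈T} (B_{ij} − (B_P)_{ij}) | ≤ η. -/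
/-- The block-averaged matrix `B_P`: entry `(i,j)` is the average of `B` over the block
`P(i) × P(j)` of the partition encoded by the class map `f` (the classes are the fibers
of `f`). -/
noncomputable def blockAvg {N k : ℕ} (f : Fin N → Fin k) (B : Fin N → Fin N → ℝ)
    (i j : Fin N) : ℝ :=
  (∑ i' ∈ Finset.univ.filter (fun x => f x = f i),
      ∑ j' ∈ Finset.univ.filter (fun x => f x = f j), B i' j') /
    (((Finset.univ.filter (fun x : Fin N => f x = f i)).card : ℝ) *
      ((Finset.univ.filter (fun x : Fin N => f x = f j)).card : ℝ))

namespace Stmt16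

open Finset

variable {N k : ℕ}

lemma blockAvg_congr (f : Fin N → Fin k) (B : Fin N → Fin N → ℝ) {i i' j j' : Fin N}
    (h1 : f i = f i') (h2 : f j = f j') : blockAvg f B i j = blockAvg f B i' j' := by
  simp only [blockAvg, h1, h2]

/-- Conditional expectation property: `blockAvg f B` and `B` have the same inner product
with any function depending only on the classes of `f`. -/
lemma key (f : Fin N → Fin k) (B h : Fin N → Fin N → ℝ)
    (hh : ∀ i i' j j', f i = f i' → f j = f j' → h i j = h i' j') :
    ∑ i, ∑ j, blockAvg f B i j * h i j = ∑ i, ∑ j, B i j * h i j := by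
  have main : ∀ (F : Fin N → Fin N → ℝ),
      ∑ i, ∑ j, F i j = ∑ a : Fin k, ∑ b : Fin k,
        ∑ i ∈ Finset.univ.filter (fun x => f x = a),
          ∑ j ∈ Finset.univ.filter (fun x => f x = b), F i j := by
    intro F
    have h1 : ∑ a : Fin k, ∑ i ∈ Finset.univ.filter (fun x => f x = a), (∑ j, F i j)
        = ∑ i, ∑ j, F i j := Finset.sum_fiberwise Finset.univ f (fun i => ∑ j, F i j)
    rw [← h1]
    refine Finset.sum_congr rfl fun a _ => ?_
    calc ∑ i ∈ Finset.univ.filter (fun x => f x = a), ∑ j, F i j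
        = ∑ i ∈ Finset.univ.filter (fun x => f x = a), ∑ b : Fin k,
            ∑ j ∈ Finset.univ.filter (fun x => f x = b), F i j :=
          Finset.sum_congr rfl fun i _ =>
            (Finset.sum_fiberwise Finset.univ f (fun j => F i j)).symm
      _ = _ := Finset.sum_comm
  rw [main, main]
  refine Finset.sum_congr rfl fun a _ => Finset.sum_congr rfl fun b _ => ?_
  rcases (Finset.univ.filter (fun x => f x = a)).eq_empty_or_nonempty with hA | ⟨i₀, hi₀⟩
  · simp [hA]
  rcases (Finset.univ.filter (fun x => f x = b)).eq_empty_or_nonempty with hBe | ⟨j₀, hj₀⟩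
  · simp [hBe]
  have hfi₀ : f i₀ = a := (Finset.mem_filter.1 hi₀).2
  have hfj₀ : f j₀ = b := (Finset.mem_filter.1 hj₀).2
  set ca : ℝ := ((Finset.univ.filter (fun x => f x = a)).card : ℝ) with hca
  set cb : ℝ := ((Finset.univ.filter (fun x => f x = b)).card : ℝ) with hcb
  have hcapos : 0 < ca := by
    have h : 0 < (Finset.univ.filter (fun x => f x = a)).card :=
      Finset.card_pos.2 ⟨i₀, hi₀⟩
    rw [hca]
    exact_mod_cast h
  have hcbpos : 0 < cb := by
    have h : 0 < (Finset.univ.filter (fun x => f x = b)).card :=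
      Finset.card_pos.2 ⟨j₀, hj₀⟩
    rw [hcb]
    exact_mod_cast h
  set S : ℝ := ∑ i' ∈ Finset.univ.filter (fun x => f x = a),
      ∑ j' ∈ Finset.univ.filter (fun x => f x = b), B i' j' with hS
  have havg : ∀ i ∈ Finset.univ.filter (fun x => f x = a),
      ∀ j ∈ Finset.univ.filter (fun x => f x = b),
      blockAvg f B i j = S / (ca * cb) := by
    intro i hi j hj
    have hfi : f i = a := (Finset.mem_filter.1 hi).2
    have hfj : f j = b := (Finset.mem_filter.1 hj).2
    simp only [blockAvg, hfi, hfj, hca, hcb, hS]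
  have hhc : ∀ i ∈ Finset.univ.filter (fun x => f x = a),
      ∀ j ∈ Finset.univ.filter (fun x => f x = b), h i j = h i₀ j₀ := by
    intro i hi j hj
    exact hh i i₀ j j₀ (by rw [(Finset.mem_filter.1 hi).2, hfi₀])
      (by rw [(Finset.mem_filter.1 hj).2, hfj₀])
  calc ∑ i ∈ Finset.univ.filter (fun x => f x = a),
        ∑ j ∈ Finset.univ.filter (fun x => f x = b), blockAvg f B i j * h i j
      = ∑ i ∈ Finset.univ.filter (fun x => f x = a),
        ∑ j ∈ Finset.univ.filter (fun x => f x = b), S / (ca * cb) * h i₀ j₀ := by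
        refine Finset.sum_congr rfl fun i hi => Finset.sum_congr rfl fun j hj => ?_
        rw [havg i hi j hj, hhc i hi j hj]
    _ = ca * cb * (S / (ca * cb) * h i₀ j₀) := by
        rw [Finset.sum_const, Finset.sum_const]
        push_cast
        ring
    _ = S * h i₀ j₀ := by field_simp
    _ = ∑ i ∈ Finset.univ.filter (fun x => f x = a),
        ∑ j ∈ Finset.univ.filter (fun x => f x = b), B i j * h i j := by
        rw [hS, Finset.sum_mul]
        refine Finset.sum_congr rfl fun i hi => ?_
        rw [Finset.sum_mul]
        refine Finset.sum_congr rfl fun j hj => ?_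
        rw [hhc i hi j hj]

noncomputable def energy (f : Fin N → Fin k) (B : Fin N → Fin N → ℝ) : ℝ :=
  ∑ i, ∑ j, (blockAvg f B i j) ^ 2

lemma energy_nonneg (f : Fin N → Fin k) (B : Fin N → Fin N → ℝ) : 0 ≤ energy f B := by
  refine Finset.sum_nonneg fun i _ => Finset.sum_nonneg fun j _ => sq_nonneg _

lemma blockAvg_mem_Icc (f : Fin N → Fin k) (B : Fin N → Fin N → ℝ)
    (hB : ∀ i j, 0 ≤ B i j ∧ B i j ≤ 1) (i j : Fin N) :
    0 ≤ blockAvg f B i j ∧ blockAvg f B i j ≤ 1 := by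
  have hcapos : 0 < ((Finset.univ.filter (fun x => f x = f i)).card : ℝ) := by
    have : 0 < (Finset.univ.filter (fun x => f x = f i)).card :=
      Finset.card_pos.2 ⟨i, Finset.mem_filter.2 ⟨Finset.mem_univ _, rfl⟩⟩
    exact_mod_cast this
  have hcbpos : 0 < ((Finset.univ.filter (fun x => f x = f j)).card : ℝ) := by
    have : 0 < (Finset.univ.filter (fun x => f x = f j)).card :=
      Finset.card_pos.2 ⟨j, Finset.mem_filter.2 ⟨Finset.mem_univ _, rfl⟩⟩
    exact_mod_cast this
  constructor
  · unfold blockAvg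
    apply div_nonneg
    · exact Finset.sum_nonneg fun i' _ => Finset.sum_nonneg fun j' _ => (hB i' j').1
    · positivity
  · unfold blockAvg
    rw [div_le_one (mul_pos hcapos hcbpos)]
    calc ∑ i' ∈ Finset.univ.filter (fun x => f x = f i),
          ∑ j' ∈ Finset.univ.filter (fun x => f x = f j), B i' j'
        ≤ ∑ i' ∈ Finset.univ.filter (fun x => f x = f i),
          ∑ j' ∈ Finset.univ.filter (fun x => f x = f j), (1 : ℝ) := by
          refine Finset.sum_le_sum fun i' _ => Finset.sum_le_sum fun j' _ => (hB i' j').2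
      _ = _ := by simp [mul_comm]

lemma energy_le (f : Fin N → Fin k) (B : Fin N → Fin N → ℝ)
    (hB : ∀ i j, 0 ≤ B i j ∧ B i j ≤ 1) : energy f B ≤ (N : ℝ) ^ 2 := by
  have : energy f B ≤ ∑ _i : Fin N, ∑ _j : Fin N, (1 : ℝ) := by
    refine Finset.sum_le_sum fun i _ => Finset.sum_le_sum fun j _ => ?_
    obtain ⟨h0, h1⟩ := blockAvg_mem_Icc f B hB i j
    nlinarith
  simpa [sq] using this

/-- Energy increment under refinement, with the cut-norm failure hypothesis. -/
lemma refine_energy {k : ℕ} (η : ℝ) (hη : 0 ≤ η) (hN : 0 < N)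
    (f : Fin N → Fin k) (B : Fin N → Fin N → ℝ) (S T : Finset (Fin N))
    (hST : η * (N : ℝ) ^ 2 < |∑ i ∈ S, ∑ j ∈ T, (B i j - blockAvg f B i j)|) :
    ∃ g : Fin N → Fin (4 * k), energy f B + η ^ 2 * (N : ℝ) ^ 2 ≤ energy g B := by
  have hcard : Fintype.card (Fin k × Bool × Bool) = 4 * k := by
    simp [Fintype.card_prod]; ring
  let e : (Fin k × Bool × Bool) ≃ Fin (4 * k) := Fintype.equivFinOfCardEq hcard
  let g : Fin N → Fin (4 * k) := fun x => e (f x, decide (x ∈ S), decide (x ∈ T))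
  have hg : ∀ x y, g x = g y →
      f x = f y ∧ (x ∈ S ↔ y ∈ S) ∧ (x ∈ T ↔ y ∈ T) := by
    intro x y hxy
    have := e.injective hxy
    have h1 : f x = f y := congrArg Prod.fst this
    have h2 : decide (x ∈ S) = decide (y ∈ S) := congrArg (fun p => p.2.1) this
    have h3 : decide (x ∈ T) = decide (y ∈ T) := congrArg (fun p => p.2.2) this
    exact ⟨h1, decide_eq_decide.1 h2, decide_eq_decide.1 h3⟩
  set A : Fin N → Fin N → ℝ := blockAvg f B with hA
  set A' : Fin N → Fin N → ℝ := blockAvg g B with hA'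
  -- identities
  have h1 : ∑ i, ∑ j, A' i j * A' i j = ∑ i, ∑ j, B i j * A' i j :=
    key g B A' (fun i i' j j' hi hj => blockAvg_congr g B hi hj)
  have h2 : ∑ i, ∑ j, A' i j * A i j = ∑ i, ∑ j, B i j * A i j :=
    key g B A (fun i i' j j' hi hj =>
      blockAvg_congr f B (hg _ _ hi).1 (hg _ _ hj).1)
  have h3 : ∑ i, ∑ j, A i j * A i j = ∑ i, ∑ j, B i j * A i j :=
    key f B A (fun i i' j j' hi hj => blockAvg_congr f B hi hj)
  -- indicator identity
  have hind : ∑ i ∈ S, ∑ j ∈ T, A' i j = ∑ i ∈ S, ∑ j ∈ T, B i j := by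
    have conv : ∀ F : Fin N → Fin N → ℝ,
        ∑ i, ∑ j, F i j * ((if i ∈ S then (1:ℝ) else 0) * (if j ∈ T then (1:ℝ) else 0))
          = ∑ i ∈ S, ∑ j ∈ T, F i j := by
      intro F
      rw [← Finset.sum_filter_add_sum_filter_not Finset.univ (· ∈ S)]
      have hSf : Finset.univ.filter (· ∈ S) = S := by
        ext x; simp
      have hnot : ∑ i ∈ Finset.univ.filter (fun x => ¬ x ∈ S),
          ∑ j, F i j * ((if i ∈ S then (1:ℝ) else 0) * (if j ∈ T then (1:ℝ) else 0)) = 0 := by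
        refine Finset.sum_eq_zero fun i hi => ?_
        have : i ∉ S := (Finset.mem_filter.1 hi).2
        simp [this]
      rw [hnot, add_zero, hSf]
      refine Finset.sum_congr rfl fun i hi => ?_
      rw [← Finset.sum_filter_add_sum_filter_not Finset.univ (· ∈ T)]
      have hTf : Finset.univ.filter (· ∈ T) = T := by ext x; simp
      have hnot2 : ∑ j ∈ Finset.univ.filter (fun x => ¬ x ∈ T),
          F i j * ((if i ∈ S then (1:ℝ) else 0) * (if j ∈ T then (1:ℝ) else 0)) = 0 := by
        refine Finset.sum_eq_zero fun j hj => ?_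
        have : j ∉ T := (Finset.mem_filter.1 hj).2
        simp [this]
      rw [hnot2, add_zero, hTf]
      refine Finset.sum_congr rfl fun j hj => ?_
      simp [hi, hj]
    have := key g B
      (fun i j => (if i ∈ S then (1:ℝ) else 0) * (if j ∈ T then (1:ℝ) else 0))
      (fun i i' j j' hi hj => by
        rw [if_congr (hg _ _ hi).2.1 rfl rfl, if_congr (hg _ _ hj).2.2 rfl rfl])
    rw [conv A', conv B] at this
    exact this
  -- energy difference identity
  have hdiff : energy g B - energy f B = ∑ i, ∑ j, (A' i j - A i j) ^ 2 := by
    have expand : ∀ i j : Fin N, (A' i j - A i j) ^ 2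
        = A' i j * A' i j - 2 * (A' i j * A i j) + A i j * A i j := by
      intro i j; ring
    have : ∑ i, ∑ j, (A' i j - A i j) ^ 2
        = (∑ i, ∑ j, A' i j * A' i j) - 2 * (∑ i, ∑ j, A' i j * A i j)
          + ∑ i, ∑ j, A i j * A i j := by
      simp_rw [expand]
      simp only [Finset.sum_add_distrib, Finset.sum_sub_distrib, ← Finset.mul_sum]
    rw [this, h2, ← h3]
    have e1 : energy g B = ∑ i, ∑ j, A' i j * A' i j := by
      simp [energy, sq, hA']
    have e2 : energy f B = ∑ i, ∑ j, A i j * A i j := by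
      simp [energy, sq, hA]
    rw [e1, e2]; ring
  -- cut-norm failure transfers to A' - A
  have htrans : η * (N : ℝ) ^ 2 < |∑ i ∈ S, ∑ j ∈ T, (A' i j - A i j)| := by
    have hswap : ∑ i ∈ S, ∑ j ∈ T, (B i j - A i j) = ∑ i ∈ S, ∑ j ∈ T, (A' i j - A i j) := by
      simp only [Finset.sum_sub_distrib]
      rw [hind]
    rw [← hswap]
    exact hST
  -- Cauchy–Schwarz
  have hCS : η ^ 2 * (N : ℝ) ^ 2 < ∑ i, ∑ j, (A' i j - A i j) ^ 2 := by
    set x : ℝ := ∑ i ∈ S, ∑ j ∈ T, (A' i j - A i j) with hx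
    have hsq : (η * (N : ℝ) ^ 2) ^ 2 < x ^ 2 := by
      have h0 : 0 ≤ η * (N : ℝ) ^ 2 := by positivity
      calc (η * (N : ℝ) ^ 2) ^ 2 < |x| ^ 2 := by
            apply pow_lt_pow_left₀ htrans h0
            norm_num
        _ = x ^ 2 := sq_abs x
    have hprod : x = ∑ p ∈ S ×ˢ T, (A' p.1 p.2 - A p.1 p.2) := by
      rw [Finset.sum_product]
    have hcs2 : x ^ 2 ≤ ((S ×ˢ T).card : ℝ) * ∑ p ∈ S ×ˢ T, (A' p.1 p.2 - A p.1 p.2) ^ 2 := by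
      rw [hprod]
      have := sq_sum_le_card_mul_sum_sq (s := S ×ˢ T)
        (f := fun p => A' p.1 p.2 - A p.1 p.2)
      exact_mod_cast this
    have hsub : ∑ p ∈ S ×ˢ T, (A' p.1 p.2 - A p.1 p.2) ^ 2
        ≤ ∑ p ∈ (Finset.univ : Finset (Fin N × Fin N)), (A' p.1 p.2 - A p.1 p.2) ^ 2 := by
      refine Finset.sum_le_sum_of_subset_of_nonneg (Finset.subset_univ _)
        (fun p _ _ => sq_nonneg _)
    have hcard' : ((S ×ˢ T).card : ℝ) ≤ (N : ℝ) ^ 2 := by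
      have : (S ×ˢ T).card ≤ N * N := by
        rw [Finset.card_product]
        exact Nat.mul_le_mul (by simpa using Finset.card_le_card (Finset.subset_univ S))
          (by simpa using Finset.card_le_card (Finset.subset_univ T))
      calc ((S ×ˢ T).card : ℝ) ≤ ((N * N : ℕ) : ℝ) := by exact_mod_cast this
        _ = (N : ℝ) ^ 2 := by push_cast; ring
    have huniv : ∑ p ∈ (Finset.univ : Finset (Fin N × Fin N)), (A' p.1 p.2 - A p.1 p.2) ^ 2
        = ∑ i, ∑ j, (A' i j - A i j) ^ 2 := by
      rw [← Finset.univ_product_univ, Finset.sum_product]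
    have hE0 : 0 ≤ ∑ i, ∑ j, (A' i j - A i j) ^ 2 :=
      Finset.sum_nonneg fun i _ => Finset.sum_nonneg fun j _ => sq_nonneg _
    have hNpos : (0:ℝ) < (N : ℝ) ^ 2 := by positivity
    nlinarith [hsq, hcs2, hsub, hcard', huniv]
  exact ⟨g, by linarith [hdiff, hCS]⟩

lemma iterate (η : ℝ) (hη0 : 0 < η) (N : ℕ) (hN : 0 < N) (B : Fin N → Fin N → ℝ)
    (hB : ∀ i j, 0 ≤ B i j ∧ B i j ≤ 1) :
    ∀ t : ℕ, ∃ k : ℕ, ∃ f : Fin N → Fin k, k ≤ 4 ^ t ∧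
      ((∀ S T : Finset (Fin N),
          |∑ i ∈ S, ∑ j ∈ T, (B i j - blockAvg f B i j)| ≤ η * (N : ℝ) ^ 2) ∨
        ((t : ℝ) * (η ^ 2 * (N : ℝ) ^ 2) ≤ energy f B)) := by
  intro t
  induction t with
  | zero =>
    refine ⟨1, fun _ => 0, le_refl _, Or.inr ?_⟩
    simpa using energy_nonneg (fun _ : Fin N => (0 : Fin 1)) B
  | succ t ih =>
    obtain ⟨k, f, hk, hor⟩ := ih
    by_cases hgood : ∀ S T : Finset (Fin N),
        |∑ i ∈ S, ∑ j ∈ T, (B i j - blockAvg f B i j)| ≤ η * (N : ℝ) ^ 2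
    · exact ⟨k, f, hk.trans (Nat.pow_le_pow_right (by norm_num) (Nat.le_succ t)),
        Or.inl hgood⟩
    · push_neg at hgood
      obtain ⟨S, T, hST⟩ := hgood
      have hE : (t : ℝ) * (η ^ 2 * (N : ℝ) ^ 2) ≤ energy f B := by
        rcases hor with h | h
        · exact absurd (h S T) (not_le.2 hST)
        · exact h
      obtain ⟨g, hgE⟩ := refine_energy η hη0.le hN f B S T hST
      refine ⟨4 * k, g, ?_, Or.inr ?_⟩
      · calc 4 * k ≤ 4 * 4 ^ t := Nat.mul_le_mul_left _ hk
          _ = 4 ^ (t + 1) := by rw [pow_succ, Nat.mul_comm]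
      · push_cast
        nlinarith [hE, hgE]

end Stmt16

/-- **Lemma 9 (weak regularity lemma for directed graphs).** There is a constant
`C₀ > 0` such that for every `η ∈ (0,1)` and every directed graph on `N` vertices with
adjacency matrix `B ∈ {0,1}^{N×N}`, there is a partition of `{1,…,N}` into
`k ≤ exp(C₀/η²)` classes such that the block-averaged matrix `B_P` satisfies the cut
norm bound `(1/N²) max_{S,T} |∑_{i∈S,j∈T} (B_{ij} − (B_P)_{ij})| ≤ η`. -/
theorem stmt_16 :
    ∃ C₀ : ℝ, 0 < C₀ ∧
      ∀ η : ℝ, η ∈ Set.Ioo (0 : ℝ) 1 →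
        ∀ (N : ℕ) (B : Fin N → Fin N → ℝ),
          (∀ i j, B i j = 0 ∨ B i j = 1) →
          ∃ (k : ℕ) (f : Fin N → Fin k),
            (k : ℝ) ≤ Real.exp (C₀ / η ^ 2) ∧
            ∀ S T : Finset (Fin N),
              |∑ i ∈ S, ∑ j ∈ T, (B i j - blockAvg f B i j)| ≤ η * (N : ℝ) ^ 2 := by
  refine ⟨6, by norm_num, ?_⟩
  rintro η ⟨hη0, hη1⟩ N B hB01
  have hη2 : (0:ℝ) < η ^ 2 := by positivity
  have hB : ∀ i j, 0 ≤ B i j ∧ B i j ≤ 1 := fun i j => by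
    rcases hB01 i j with h | h <;> rw [h] <;> norm_num
  rcases Nat.eq_zero_or_pos N with rfl | hN
  · refine ⟨1, fun _ => 0, ?_, ?_⟩
    · simpa using Real.one_le_exp (by positivity)
    · intro S T
      have hS : S = ∅ := Finset.eq_empty_of_isEmpty S
      rw [hS]
      simp
  · set t : ℕ := ⌈1 / η ^ 2⌉₊ + 1 with ht
    obtain ⟨k, f, hk, hor⟩ := Stmt16.iterate η hη0 N hN B hB t
    have hN2 : (0:ℝ) < (N:ℝ) ^ 2 := by positivity
    have htgt : 1 / η ^ 2 < (t : ℝ) := by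
      calc 1 / η ^ 2 ≤ (⌈1 / η ^ 2⌉₊ : ℝ) := Nat.le_ceil _
        _ < (t : ℝ) := by rw [ht]; push_cast; linarith
    have hleft : ∀ S T : Finset (Fin N),
        |∑ i ∈ S, ∑ j ∈ T, (B i j - blockAvg f B i j)| ≤ η * (N : ℝ) ^ 2 := by
      rcases hor with h | h
      · exact h
      · exfalso
        have h1 : (t : ℝ) * (η ^ 2 * (N : ℝ) ^ 2) ≤ (N : ℝ) ^ 2 :=
          h.trans (Stmt16.energy_le f B hB)
        have ht2 : (t : ℝ) * η ^ 2 ≤ 1 := by nlinarith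
        have hmul : 1 / η ^ 2 * η ^ 2 = 1 := by field_simp
        nlinarith [mul_lt_mul_of_pos_right htgt hη2]
    refine ⟨k, f, ?_, hleft⟩
    have hk4 : (k : ℝ) ≤ (4 : ℝ) ^ t := by
      calc (k : ℝ) ≤ ((4 ^ t : ℕ) : ℝ) := by exact_mod_cast hk
        _ = (4 : ℝ) ^ t := by push_cast; ring
    have h4 : (4 : ℝ) ≤ Real.exp 2 := by
      have h := Real.exp_one_gt_d9
      have h2 : Real.exp 2 = Real.exp 1 * Real.exp 1 := by
        rw [← Real.exp_add]; norm_num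
      nlinarith [h, Real.exp_pos 1]
    have hpow : (4 : ℝ) ^ t ≤ Real.exp 2 ^ t := pow_le_pow_left₀ (by norm_num) h4 t
    have hexp : Real.exp 2 ^ t = Real.exp ((t : ℝ) * 2) := (Real.exp_nat_mul 2 t).symm
    have hone : 1 ≤ 1 / η ^ 2 := by
      rw [le_div_iff₀ hη2]; nlinarith
    have htle : (t : ℝ) ≤ 3 / η ^ 2 := by
      have hceil : (⌈1 / η ^ 2⌉₊ : ℝ) < 1 / η ^ 2 + 1 := Nat.ceil_lt_add_one (by positivity)
      have h1 : (t : ℝ) < 1 / η ^ 2 + 2 := by rw [ht]; push_cast; linarith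
      have h2 : 3 / η ^ 2 = 3 * (1 / η ^ 2) := by ring
      linarith
    calc (k : ℝ) ≤ (4 : ℝ) ^ t := hk4
      _ ≤ Real.exp 2 ^ t := hpow
      _ = Real.exp ((t : ℝ) * 2) := hexp
      _ ≤ Real.exp (6 / η ^ 2) := by
          apply Real.exp_le_exp.2
          have : (6 : ℝ) / η ^ 2 = (3 / η ^ 2) * 2 := by ring
          rw [this]
          linarith
end
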